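/- arXiv:1312.4326 — 4 statements merged into one kernel-verified Lean document; each statement's English description precedes it below -/
import Mathlib

section
/- Let F be an algebraically closed field of characteristic 0, let n ≥ 2, let V be an n-dimensional F-vector space, and let ξ ∈ F be a primitive n-th root of unity. Suppose x, y ∈ End_F(V) satisfy det x = det y = 1 and x y = ξ y x. Then x^n = y^n = 1_V if n is odd and x^n = y^n = −1_V if n is even, and the pair (x, y) is unique up to simultaneous conjugation: if x', y' ∈ End_F(V) is another pair with det x' = det y' = 1 and x' y' = ξ y' x', then there exists g ∈ GL(V) with g x g⁻¹ = x' and g y g⁻¹ = y'. -/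
section Aux

variable {F V : Type} [Field F] [AddCommGroup V] [Module F V]

private lemma pow_eigen (f : Module.End F V) (c : F) (w : V) (h : f w = c • w) (m : ℕ) :
    (f ^ m) w = c ^ m • w := by
  induction m with
  | zero => simp
  | succ m ih =>
    rw [pow_succ', Module.End.mul_apply, ih, map_smul, h, smul_smul, ← pow_succ]

private lemma det_eigenbasis [FiniteDimensional F V] {n : ℕ} (b : Module.Basis (Fin n) F V)
    (f : Module.End F V) (d : Fin n → F) (h : ∀ k, f (b k) = d k • b k) :
    LinearMap.det f = ∏ k, d k := by
  rw [← LinearMap.det_toMatrix b]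
  have hM : LinearMap.toMatrix b b f = Matrix.diagonal d := by
    ext i j
    rw [LinearMap.toMatrix_apply, h j, map_smul, Module.Basis.repr_self]
    by_cases hij : i = j
    · subst hij; simp
    · rw [Matrix.diagonal_apply_ne _ hij]
      simp [Finsupp.single_apply, Ne.symm hij]
  rw [hM, Matrix.det_diagonal]

private lemma sign_lemma {n : ℕ} (hn : 2 ≤ n) {ξ : F} (hξ : IsPrimitiveRoot ξ n) :
    ξ ^ (∑ k : Fin n, (k : ℕ)) = (-1 : F) ^ (n - 1) := by
  have hS : (∑ k : Fin n, (k : ℕ)) = ∑ i ∈ Finset.range n, i := by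
    exact Fin.sum_univ_eq_sum_range (fun i => i) n
  have hG : (∑ i ∈ Finset.range n, i) * 2 = n * (n - 1) := Finset.sum_range_id_mul_two n
  rcases Nat.even_or_odd n with ⟨m, hm⟩ | ⟨m, hm⟩
  · -- n = m + m
    have h2 : n * (n - 1) = (m * (n - 1)) * 2 := by rw [hm]; ring
    have hSm : (∑ k : Fin n, (k : ℕ)) = m * (n - 1) := by omega
    have hm1 : ξ ^ m = -1 := by
      have h2 : ξ ^ m * ξ ^ m = 1 := by
        rw [← pow_add]
        have : m + m = n := hm.symm
        rw [this]; exact hξ.pow_eq_one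
      rcases mul_self_eq_one_iff.mp h2 with h | h
      · exact absurd h (hξ.pow_ne_one_of_pos_of_lt (by omega) (by omega))
      · exact h
    rw [hSm, pow_mul, hm1]
  · -- n = 2*m + 1
    have hn1 : n - 1 = 2 * m := by omega
    have h2 : n * (n - 1) = (n * m) * 2 := by rw [hn1]; ring
    have hSm : (∑ k : Fin n, (k : ℕ)) = n * m := by omega
    have h1 : Even (n - 1) := ⟨m, by omega⟩
    rw [hSm, pow_mul, hξ.pow_eq_one, one_pow, h1.neg_one_pow]

end Aux

section Key

variable {F V : Type} [Field F] [IsAlgClosed F] [CharZero F]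
  [AddCommGroup V] [Module F V] [FiniteDimensional F V]

private lemma inj_of_det_ne_zero {f : Module.End F V} (hf : LinearMap.det f ≠ 0) :
    Function.Injective f := by
  have hce : ∀ w : V, f w = f.equivOfDetNeZero hf w := fun _ => rfl
  intro a b hab
  apply (f.equivOfDetNeZero hf).injective
  rw [← hce, ← hce]; exact hab

private theorem keyA {n : ℕ} (hn : 2 ≤ n) (hdim : Module.finrank F V = n)
    {ξ : F} (hξ : IsPrimitiveRoot ξ n)
    {x y : Module.End F V} (hx : LinearMap.det x = 1) (hy : LinearMap.det y = 1)
    (hcomm : x * y = ξ • (y * x)) :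
    x ^ n = ((-1 : F) ^ (n - 1)) • 1 ∧
      ∀ μ : F, μ ^ n = (-1 : F) ^ (n - 1) → x.HasEigenvalue μ := by
  haveI : Nontrivial V := Module.nontrivial_of_finrank_pos (R := F)
    (by rw [hdim]; omega)
  haveI : NeZero n := ⟨by omega⟩
  have hxinj : Function.Injective x := inj_of_det_ne_zero (by rw [hx]; exact one_ne_zero)
  have hyinj : Function.Injective y := inj_of_det_ne_zero (by rw [hy]; exact one_ne_zero)
  obtain ⟨μ0, hμ0⟩ := Module.End.exists_eigenvalue x
  obtain ⟨v0, hv0⟩ := hμ0.exists_hasEigenvector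
  have hx0 : x v0 = μ0 • v0 := Module.End.mem_eigenspace_iff.mp hv0.1
  have hμ0ne : μ0 ≠ 0 := by
    intro h
    apply hv0.2
    apply hxinj
    rw [hx0, h, zero_smul, map_zero]
  have hfun : ∀ w : V, x (y w) = ξ • y (x w) := by
    intro w
    have := DFunLike.congr_fun hcomm w
    simpa [Module.End.mul_apply] using this
  set v : ℕ → V := fun m => (y ^ m) v0 with hv
  have hstep : ∀ m, v (m + 1) = y (v m) := by
    intro m; simp only [hv, pow_succ', Module.End.mul_apply]
  have key : ∀ m, x (v m) = (ξ ^ m * μ0) • v m := by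
    intro m
    induction m with
    | zero => simpa [hv] using hx0
    | succ m ih =>
      rw [hstep, hfun, ih, map_smul, smul_smul]
      congr 1
      ring
  have hvne : ∀ m, v m ≠ 0 := by
    intro m
    induction m with
    | zero => exact hv0.2
    | succ m ih =>
      rw [hstep]
      intro h
      exact ih (hyinj (by rw [h, map_zero]))
  have heig : ∀ m : ℕ, x.HasEigenvector (ξ ^ m * μ0) (v m) :=
    fun m => ⟨Module.End.mem_eigenspace_iff.mpr (key m), hvne m⟩
  set d : Fin n → F := fun k => ξ ^ (k : ℕ) * μ0 with hd
  have hdinj : Function.Injective d := by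
    intro i j hij
    exact Fin.ext (hξ.pow_inj i.2 j.2 (mul_right_cancel₀ hμ0ne hij))
  have li : LinearIndependent F (fun k : Fin n => v (k : ℕ)) :=
    x.eigenvectors_linearIndependent' d hdinj _ (fun k => heig (k : ℕ))
  haveI : Nonempty (Fin n) := ⟨⟨0, by omega⟩⟩
  set b : Module.Basis (Fin n) F V :=
    basisOfLinearIndependentOfCardEqFinrank li (by simp [hdim]) with hbdef
  have hb : ∀ k : Fin n, b k = v (k : ℕ) := by
    intro k
    rw [hbdef, coe_basisOfLinearIndependentOfCardEqFinrank]
  have hdet : LinearMap.det x = ∏ k, d k :=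
    det_eigenbasis b x d (fun k => by rw [hb k]; exact key (k : ℕ))
  have hprod : (∏ k, d k) = (-1 : F) ^ (n - 1) * μ0 ^ n := by
    rw [hd]
    rw [Finset.prod_mul_distrib, Finset.prod_const, Finset.card_univ, Fintype.card_fin,
      Finset.prod_pow_eq_pow_sum, sign_lemma hn hξ]
  have hee : ((-1 : F) ^ (n - 1)) * ((-1 : F) ^ (n - 1)) = 1 := by
    rw [← pow_add]
    exact Even.neg_one_pow ⟨n - 1, rfl⟩
  have hμ0n : μ0 ^ n = (-1 : F) ^ (n - 1) := by
    have h1 : (-1 : F) ^ (n - 1) * μ0 ^ n = 1 := by rw [← hprod, ← hdet, hx]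
    calc μ0 ^ n = ((-1 : F) ^ (n - 1) * (-1 : F) ^ (n - 1)) * μ0 ^ n := by rw [hee, one_mul]
      _ = (-1 : F) ^ (n - 1) * ((-1 : F) ^ (n - 1) * μ0 ^ n) := by ring
      _ = (-1 : F) ^ (n - 1) := by rw [h1, mul_one]
  constructor
  · apply b.ext
    intro k
    rw [hb k]
    rw [pow_eigen x _ _ (key (k : ℕ)) n]
    have : (ξ ^ (k : ℕ) * μ0) ^ n = (-1 : F) ^ (n - 1) := by
      rw [mul_pow, ← pow_mul, mul_comm (k : ℕ) n, pow_mul, hξ.pow_eq_one, one_pow, one_mul, hμ0n]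
    rw [this]
    simp
  · intro μ hμ
    have hεne : ((-1 : F) ^ (n - 1)) ≠ 0 := pow_ne_zero _ (by norm_num)
    have h1 : (μ * μ0⁻¹) ^ n = 1 := by
      rw [mul_pow, inv_pow, hμ, hμ0n, mul_inv_cancel₀ hεne]
    obtain ⟨i, hi, hie⟩ := hξ.eq_pow_of_pow_eq_one h1
    have hμeq : μ = ξ ^ i * μ0 := by
      rw [hie]
      field_simp
    rw [hμeq]
    exact Module.End.hasEigenvalue_of_hasEigenvector (heig i)

private theorem keyB {n : ℕ} (hn : 2 ≤ n) (hdim : Module.finrank F V = n)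
    {ξ : F} (hξ : IsPrimitiveRoot ξ n)
    {x y : Module.End F V} (hxd : LinearMap.det x = 1)
    (hxn : x ^ n = ((-1 : F) ^ (n - 1)) • 1)
    (hcomm : x * y = ξ • (y * x)) {l : F} (hl : l ≠ 0) (hev : y.HasEigenvalue l) :
    ∃ b : Module.Basis (Fin n) F V,
      (∀ k : Fin n, y (b k) = (l * ξ ^ (k : ℕ)) • b k) ∧
      (∀ k : Fin n, x (b k) =
        if (k : ℕ) = 0 then ((-1 : F) ^ (n - 1)) • b ⟨n - 1, by omega⟩
        else b ⟨(k : ℕ) - 1, by have := k.isLt; omega⟩) := by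
  have hxne : LinearMap.det x ≠ 0 := by rw [hxd]; exact one_ne_zero
  set e : V ≃ₗ[F] V := x.equivOfDetNeZero hxne with hedef
  have hce : ∀ w : V, x w = e w := fun _ => rfl
  have hfun : ∀ w : V, x (y w) = ξ • y (x w) := by
    intro w
    have := DFunLike.congr_fun hcomm w
    simpa [Module.End.mul_apply] using this
  obtain ⟨v0, hv0⟩ := hev.exists_hasEigenvector
  have hyv0 : y v0 = l • v0 := Module.End.mem_eigenspace_iff.mp hv0.1
  set v : ℕ → V := fun m => ((e.symm : V →ₗ[F] V) ^ m) v0 with hv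
  have hstep : ∀ m, v (m + 1) = e.symm (v m) := by
    intro m; simp only [hv, pow_succ', Module.End.mul_apply]; rfl
  have hxstep : ∀ m, x (v (m + 1)) = v m := by
    intro m
    rw [hstep, hce, LinearEquiv.apply_symm_apply]
  have hyv : ∀ m, y (v m) = (l * ξ ^ m) • v m := by
    intro m
    induction m with
    | zero => simpa [hv] using hyv0
    | succ m ih =>
      have hkey : y (e.symm (v m)) = ξ • e.symm (y (v m)) := by
        apply e.injective
        rw [map_smul, LinearEquiv.apply_symm_apply, ← hce (y (e.symm (v m))), hfun,
          hce (e.symm (v m)), LinearEquiv.apply_symm_apply]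
      rw [hstep, hkey, ih, map_smul, smul_smul]
      congr 1
      ring
  have hvne : ∀ m, v m ≠ 0 := by
    intro m
    induction m with
    | zero => exact hv0.2
    | succ m ih =>
      rw [hstep]
      intro h
      exact ih (by simpa using congrArg e h)
  have hxm : ∀ m, (x ^ m) (v m) = v 0 := by
    intro m
    induction m with
    | zero => simp
    | succ m ih =>
      rw [pow_succ, Module.End.mul_apply, hxstep, ih]
  have hee : ((-1 : F) ^ (n - 1)) * ((-1 : F) ^ (n - 1)) = 1 := by
    rw [← pow_add]
    exact Even.neg_one_pow ⟨n - 1, rfl⟩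
  have hvn : v 0 = ((-1 : F) ^ (n - 1)) • v n := by
    have h1 : (x ^ n) (v n) = v 0 := hxm n
    rw [hxn] at h1
    simp only [LinearMap.smul_apply, Module.End.one_apply] at h1
    exact h1.symm
  have hlξne : ∀ k : ℕ, l * ξ ^ k ≠ 0 := by
    intro k
    apply mul_ne_zero hl
    exact pow_ne_zero _ (hξ.ne_zero (by omega))
  set d : Fin n → F := fun k => l * ξ ^ (k : ℕ) with hd
  have hdinj : Function.Injective d := by
    intro i j hij
    exact Fin.ext (hξ.pow_inj i.2 j.2 (mul_left_cancel₀ hl hij))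
  have heig : ∀ m : ℕ, y.HasEigenvector (l * ξ ^ m) (v m) :=
    fun m => ⟨Module.End.mem_eigenspace_iff.mpr (hyv m), hvne m⟩
  have li : LinearIndependent F (fun k : Fin n => v (k : ℕ)) :=
    y.eigenvectors_linearIndependent' d hdinj _ (fun k => heig (k : ℕ))
  haveI : Nonempty (Fin n) := ⟨⟨0, by omega⟩⟩
  have hcard : Fintype.card (Fin n) = Module.finrank F V := by simp [hdim]
  set b : Module.Basis (Fin n) F V := basisOfLinearIndependentOfCardEqFinrank li hcard with hbdef
  have hb : ∀ k : Fin n, b k = v (k : ℕ) := by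
    intro k
    rw [hbdef, coe_basisOfLinearIndependentOfCardEqFinrank]
  refine ⟨b, ?_, ?_⟩
  · intro k
    rw [hb k]
    exact hyv (k : ℕ)
  · intro k
    by_cases hk : (k : ℕ) = 0
    · rw [if_pos hk, hb k, hb, hk]
      have hsub : (n - 1) + 1 = n := by omega
      have h2 : x (v n) = v (n - 1) := by
        have h3 := hxstep (n - 1)
        rwa [hsub] at h3
      rw [hvn, map_smul, h2]
    · obtain ⟨m, hm⟩ : ∃ m, (k : ℕ) = m + 1 := ⟨(k : ℕ) - 1, by omega⟩
      have h1 : x (v (k : ℕ)) = v ((k : ℕ) - 1) := by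
        rw [hm]
        simpa using hxstep m
      rw [if_neg hk, hb k, hb]
      simpa using h1

end Key

theorem stmt12 (F V : Type) [Field F] [IsAlgClosed F] [CharZero F]
    [AddCommGroup V] [Module F V] [FiniteDimensional F V]
    (n : ℕ) (hn : 2 ≤ n) (hdim : Module.finrank F V = n)
    (ξ : F) (hξ : IsPrimitiveRoot ξ n)
    (x y : Module.End F V) (hx : LinearMap.det x = 1) (hy : LinearMap.det y = 1)
    (hcomm : x * y = ξ • (y * x)) :
    (Odd n → x ^ n = 1 ∧ y ^ n = 1) ∧
    (Even n → x ^ n = -1 ∧ y ^ n = -1) ∧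
    ∀ x' y' : Module.End F V, LinearMap.det x' = 1 → LinearMap.det y' = 1 →
      x' * y' = ξ • (y' * x') →
      ∃ g : (Module.End F V)ˣ,
        (g : Module.End F V) * x * (↑g⁻¹ : Module.End F V) = x' ∧
        (g : Module.End F V) * y * (↑g⁻¹ : Module.End F V) = y' := by
  have hξne : ξ ≠ 0 := hξ.ne_zero (by omega)
  have hξinv : IsPrimitiveRoot ξ⁻¹ n := hξ.inv
  have swap_comm : ∀ a b : Module.End F V, a * b = ξ • (b * a) → b * a = ξ⁻¹ • (a * b) := by
    intro a b h
    rw [h, smul_smul, inv_mul_cancel₀ hξne, one_smul]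
  have Ax := keyA hn hdim hξ hx hy hcomm
  have Ay := keyA hn hdim hξinv hy hx (swap_comm x y hcomm)
  refine ⟨?_, ?_, ?_⟩
  · intro hodd
    have h1 : Even (n - 1) := Nat.Odd.sub_odd hodd odd_one
    constructor
    · rw [Ax.1, h1.neg_one_pow, one_smul]
    · rw [Ay.1, h1.neg_one_pow, one_smul]
  · intro heven
    have h1 : Odd (n - 1) := Nat.Even.sub_odd (by omega) heven odd_one
    constructor
    · rw [Ax.1, h1.neg_one_pow, neg_smul, one_smul]
    · rw [Ay.1, h1.neg_one_pow, neg_smul, one_smul]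
  · intro x' y' hx' hy' hcomm'
    have Ax' := keyA hn hdim hξ hx' hy' hcomm'
    have Ay' := keyA hn hdim hξinv hy' hx' (swap_comm x' y' hcomm')
    obtain ⟨l, hl⟩ := IsAlgClosed.exists_pow_nat_eq ((-1 : F) ^ (n - 1))
      (show 0 < n by omega)
    have hlne : l ≠ 0 := by
      intro h
      rw [h, zero_pow (by omega : n ≠ 0)] at hl
      exact pow_ne_zero (n - 1) (show (-1 : F) ≠ 0 by norm_num) hl.symm
    obtain ⟨b, hb1, hb2⟩ := keyB hn hdim hξ hx Ax.1 hcomm hlne (Ay.2 l hl)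
    obtain ⟨b', hb1', hb2'⟩ := keyB hn hdim hξ hx' Ax'.1 hcomm' hlne (Ay'.2 l hl)
    set E : V ≃ₗ[F] V := b.equiv b' (Equiv.refl _) with hEdef
    have hE : ∀ k : Fin n, E (b k) = b' k := by
      intro k; rw [hEdef, Module.Basis.equiv_apply]; rfl
    have hEs : ∀ k : Fin n, E.symm (b' k) = b k := by
      intro k
      apply E.injective
      rw [LinearEquiv.apply_symm_apply, hE]
    refine ⟨⟨E.toLinearMap, E.symm.toLinearMap, ?_, ?_⟩, ?_, ?_⟩
    · ext w; simp [Module.End.mul_apply]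
    · ext w; simp [Module.End.mul_apply]
    · apply b'.ext
      intro k
      show E (x (E.symm (b' k))) = x' (b' k)
      rw [hEs k, hb2 k, hb2' k]
      split_ifs with h
      · rw [map_smul, hE]
      · rw [hE]
    · apply b'.ext
      intro k
      show E (y (E.symm (b' k))) = y' (b' k)
      rw [hEs k, hb1 k, hb1' k, map_smul, hE]
end

section
/- Let F be an algebraically closed field of characteristic 0, let n ≥ 2, and let L = ⊕_{r̄ ∈ ℤ_n} L_{r̄} be a ℤ_n-graded finite-dimensional semisimple Lie algebra over F (so [L_{r̄}, L_{s̄}] ⊆ L_{r̄+s̄}) such that L_0̄ is semisimple and each L_{r̄} with r̄ ≠ 0̄ is an irreducible L_0̄-module under the adjoint action. Let A be an abelian group and let Γ : L = ⊕_{a ∈ A} L_a and Γ' : L = ⊕_{a ∈ A} L'_a be two A-gradings of the Lie algebra L, each of which refines the ℤ_n-grading (every homogeneous component of Γ, and of Γ', is contained in some L_{r̄}), and which agree on L_0̄ (L_a ∩ L_0̄ = L'_a ∩ L_0̄ for all a ∈ A). Then Γ and Γ' differ only by shifts on the components of the ℤ_n-grading: for each r̄ ∈ ℤ_n there exists s_{r̄}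 ∈ A such that L'_a ∩ L_{r̄} = L_{s_{r̄} a} ∩ L_{r̄} for all a ∈ A. In particular, the collection of homogeneous subspaces of Γ is uniquely determined by its restriction to L_0̄. -/
section Helpers

lemma sum_congr_support {M : Type*} [AddCommMonoid M] {ι : Type*} [DecidableEq ι]
    (q : ι → M) (u v : Finset ι) (hu : ∀ a, q a ≠ 0 → a ∈ u) (hv : ∀ a, q a ≠ 0 → a ∈ v) :
    ∑ a ∈ u, q a = ∑ a ∈ v, q a := by
  rw [Finset.sum_subset (Finset.subset_union_left (s₂ := v))
      (fun b _ hb => by_contra fun h => hb (hu b h)),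
    Finset.sum_subset (Finset.subset_union_right (s₁ := u))
      (fun b _ hb => by_contra fun h => hb (hv b h))]

lemma exists_proj {F M : Type} [Field F] [AddCommGroup M] [Module F M]
    {ι : Type} [DecidableEq ι] (f : ι → Submodule F M) (h : DirectSum.IsInternal f) :
    ∃ π : ι → (M →ₗ[F] M),
      (∀ a x, π a x ∈ f a) ∧
      (∀ a x, x ∈ f a → π a x = x) ∧
      (∀ a b x, x ∈ f b → a ≠ b → π a x = 0) ∧
      (∀ x : M, ∃ t : Finset ι, x = ∑ a ∈ t, π a x ∧ ∀ a ∉ t, π a x = 0) := by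
  classical
  letI := h.chooseDecomposition
  refine ⟨fun a => (f a).subtype ∘ₗ
      (DirectSum.component F ι (fun i => ↥(f i)) a) ∘ₗ
      (DirectSum.decomposeLinearEquiv f).toLinearMap, ?_, ?_, ?_, ?_⟩
  · intro a x
    exact ((DirectSum.decompose f x) a).2
  · intro a x hx
    exact DirectSum.decompose_of_mem_same f hx
  · intro a b x hx hab
    exact DirectSum.decompose_of_mem_ne f hx (Ne.symm hab)
  · intro x
    refine ⟨(DirectSum.decompose f x).support, ?_, ?_⟩
    · exact (DirectSum.sum_support_decompose f x).symm
    · intro a ha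
      have h0 : (DirectSum.decompose f x) a = 0 := DFinsupp.notMem_support_iff.mp ha
      show ((DirectSum.decompose f x) a : M) = 0
      rw [h0]; rfl

lemma sum_proj_of_support {F M : Type} [Field F] [AddCommGroup M] [Module F M]
    {ι : Type} [DecidableEq ι] (π : ι → (M →ₗ[F] M))
    (hsum : ∀ x : M, ∃ t : Finset ι, x = ∑ a ∈ t, π a x ∧ ∀ a ∉ t, π a x = 0)
    (x : M) (u : Finset ι) (hu : ∀ a, π a x ≠ 0 → a ∈ u) :
    ∑ a ∈ u, π a x = x := by
  obtain ⟨t, hx, hout⟩ := hsum x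
  rw [sum_congr_support (fun a => π a x) u t hu (fun a ha => by_contra fun h => ha (hout a h))]
  exact hx.symm

lemma proj_lie {F L : Type} [Field F] [LieRing L] [LieAlgebra F L]
    {A : Type} [Group A] [DecidableEq A] (Θ : A → Submodule F L) (π : A → (L →ₗ[F] L))
    (hmem : ∀ a x, π a x ∈ Θ a) (hid : ∀ a x, x ∈ Θ a → π a x = x)
    (hne : ∀ a b x, x ∈ Θ b → a ≠ b → π a x = 0)
    (hsum : ∀ x : L, ∃ t : Finset A, x = ∑ b ∈ t, π b x ∧ ∀ b ∉ t, π b x = 0)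
    (hgradmul : ∀ a b : A, ∀ x ∈ Θ a, ∀ y ∈ Θ b, ⁅x, y⁆ ∈ Θ (a * b))
    (c : A) (v : L) (hv : v ∈ Θ c) (d : A) (x : L) :
    π d ⁅v, x⁆ = ⁅v, π (c⁻¹ * d) x⁆ := by
  have lie_sum' : ∀ (w : L) (u : Finset A) (f : A → L),
      ⁅w, ∑ b ∈ u, f b⁆ = ∑ b ∈ u, ⁅w, f b⁆ := by
    intro w u f
    induction u using Finset.induction with
    | empty => simp
    | insert _ _ h ih => rw [Finset.sum_insert h, Finset.sum_insert h, lie_add, ih]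
  obtain ⟨t, hx, hout⟩ := hsum x
  conv_lhs => rw [hx]
  rw [lie_sum', map_sum]
  have key : ∀ b ∈ t, π d ⁅v, π b x⁆ = if b = c⁻¹ * d then ⁅v, π b x⁆ else 0 := by
    intro b _
    have hb : ⁅v, π b x⁆ ∈ Θ (c * b) := hgradmul c b v hv _ (hmem b x)
    by_cases hbd : b = c⁻¹ * d
    · rw [if_pos hbd]; apply hid; subst hbd; rwa [mul_inv_cancel_left] at hb
    · rw [if_neg hbd]
      exact hne d (c * b) _ hb (fun h => hbd (by rw [h, inv_mul_cancel_left]))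
  rw [Finset.sum_congr rfl key, Finset.sum_ite_eq' t (c⁻¹ * d)]
  split
  · rfl
  · next h => rw [hout _ h, lie_zero]

lemma proj_stab {F M ι κ : Type} [Field F] [AddCommGroup M] [Module F M]
    [DecidableEq ι] [DecidableEq κ]
    (f : κ → Submodule F M) (πf : κ → (M →ₗ[F] M))
    (hfid : ∀ a x, x ∈ f a → πf a x = x)
    (hfne : ∀ a b x, x ∈ f b → a ≠ b → πf a x = 0)
    (Θ : ι → Submodule F M) (πΘ : ι → (M →ₗ[F] M))
    (hΘmem : ∀ a x, πΘ a x ∈ Θ a)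
    (hΘid : ∀ a x, x ∈ Θ a → πΘ a x = x)
    (hΘne : ∀ a b x, x ∈ Θ b → a ≠ b → πΘ a x = 0)
    (hΘsum : ∀ x : M, ∃ t : Finset ι, x = ∑ a ∈ t, πΘ a x ∧ ∀ a ∉ t, πΘ a x = 0)
    (ρ : ι → κ) (hρ : ∀ a, Θ a ≤ f (ρ a))
    (r : κ) (x : M) (hx : x ∈ f r) (a : ι) : πΘ a x ∈ f r := by
  by_cases hcase : ρ a = r
  · exact hcase ▸ hρ a (hΘmem a x)
  suffices hz : πΘ a x = 0 by rw [hz]; exact zero_mem _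
  obtain ⟨t, hxs, hout⟩ := hΘsum x
  by_cases hat : a ∈ t
  · have h1 : πf (ρ a) x = 0 := hfne (ρ a) r x hx hcase
    have h2 : ∑ b ∈ t, πΘ a (πf (ρ a) (πΘ b x)) = πΘ a x := by
      rw [Finset.sum_eq_single_of_mem a hat]
      · rw [hfid (ρ a) _ (hρ a (hΘmem a x)), hΘid a _ (hΘmem a x)]
      · intro b _ hba
        by_cases hbb : ρ b = ρ a
        · rw [hfid (ρ a) _ (hbb ▸ hρ b (hΘmem b x))]
          exact hΘne a b _ (hΘmem b x) (Ne.symm hba)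
        · rw [hfne (ρ a) (ρ b) _ (hρ b (hΘmem b x)) (fun h => hbb h.symm), map_zero]
    calc πΘ a x = ∑ b ∈ t, πΘ a (πf (ρ a) (πΘ b x)) := h2.symm
      _ = πΘ a (πf (ρ a) x) := by rw [← map_sum, ← map_sum, ← hxs]
      _ = 0 := by rw [h1, map_zero]
  · exact hout a hat

lemma schur_aux {F L : Type} [Field F] [IsAlgClosed F] [LieRing L] [LieAlgebra F L]
    [FiniteDimensional F L]
    (V U : Submodule F L) (hVne : V ≠ ⊥)
    (hirr : ∀ W : Submodule F L, W ≤ V → (∀ x ∈ U, ∀ w ∈ W, ⁅x, w⁆ ∈ W) → W = ⊥ ∨ W = V)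
    (hUV : ∀ u ∈ U, ∀ x ∈ V, ⁅u, x⁆ ∈ V)
    (φ : L →ₗ[F] L) (hφV : ∀ x ∈ V, φ x ∈ V)
    (hφc : ∀ u ∈ U, ∀ x ∈ V, φ ⁅u, x⁆ = ⁅u, φ x⁆) :
    ∃ c : F, ∀ x ∈ V, φ x = c • x := by
  haveI : Nontrivial ↥V := Submodule.nontrivial_iff_ne_bot.mpr hVne
  set ψ : Module.End F ↥V := φ.restrict hφV with hψ
  obtain ⟨c, hc⟩ := Module.End.exists_eigenvalue ψ
  obtain ⟨v, hv⟩ := hc.exists_hasEigenvector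
  refine ⟨c, ?_⟩
  set W : Submodule F L := LinearMap.ker (φ - c • LinearMap.id) ⊓ V with hW
  have hmemW : ∀ x, x ∈ W ↔ (φ x = c • x ∧ x ∈ V) := by
    intro x
    simp [hW, LinearMap.mem_ker, LinearMap.sub_apply, sub_eq_zero, Submodule.mem_inf]
  have hWinv : ∀ u ∈ U, ∀ w ∈ W, ⁅u, w⁆ ∈ W := by
    intro u hu w hw
    rw [hmemW] at hw ⊢
    exact ⟨by rw [hφc u hu w hw.2, hw.1, lie_smul], hUV u hu w hw.2⟩
  have hWne : W ≠ ⊥ := by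
    intro h0
    have hvW : (v : L) ∈ W := by
      rw [hmemW]
      refine ⟨?_, v.2⟩
      have h1 : ψ v = c • v := hv.apply_eq_smul
      have h2 : φ (v : L) = ((ψ v : ↥V) : L) := (LinearMap.restrict_coe_apply φ hφV v).symm
      rw [h2, h1]
      rfl
    rw [h0, Submodule.mem_bot] at hvW
    exact hv.2 (Subtype.ext hvW)
  rcases hirr W inf_le_right hWinv with h | h
  · exact absurd h hWne
  · intro x hx
    exact ((hmemW x).mp (h.symm ▸ hx)).1

end Helpers

lemma key_lemma {F L : Type} [Field F] [IsAlgClosed F] [LieRing L] [LieAlgebra F L]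
    [FiniteDimensional F L] {n : ℕ}
    (g : ZMod n → Submodule F L) (hg : DirectSum.IsInternal g)
    (hgrad : ∀ r s : ZMod n, ∀ x ∈ g r, ∀ y ∈ g s, ⁅x, y⁆ ∈ g (r + s))
    (r : ZMod n) (hrne : g r ≠ ⊥)
    (hirr : ∀ W : Submodule F L, W ≤ g r → (∀ x ∈ g 0, ∀ w ∈ W, ⁅x, w⁆ ∈ W) → W = ⊥ ∨ W = g r)
    {A : Type} [CommGroup A] [DecidableEq A] (Γ Γ' : A → Submodule F L)
    (hΓ : DirectSum.IsInternal Γ) (hΓ' : DirectSum.IsInternal Γ')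
    (hΓgrad : ∀ a b : A, ∀ x ∈ Γ a, ∀ y ∈ Γ b, ⁅x, y⁆ ∈ Γ (a * b))
    (hΓ'grad : ∀ a b : A, ∀ x ∈ Γ' a, ∀ y ∈ Γ' b, ⁅x, y⁆ ∈ Γ' (a * b))
    (href : ∀ a : A, ∃ r' : ZMod n, Γ a ≤ g r')
    (href' : ∀ a : A, ∃ r' : ZMod n, Γ' a ≤ g r')
    (hagree : ∀ a : A, Γ a ⊓ g 0 = Γ' a ⊓ g 0) :
    ∃ s : A, (∃ a : A, Γ a ⊓ g r ≠ ⊥) ∧ ∀ a : A, Γ a ⊓ g r ≤ Γ' (s * a) ⊓ g r := by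
  classical
  obtain ⟨π, hmem, hid, hne, hsum⟩ := exists_proj Γ hΓ
  obtain ⟨π', hmem', hid', hne', hsum'⟩ := exists_proj Γ' hΓ'
  obtain ⟨πg, hgmem, hgid, hgne, hgsum⟩ := exists_proj g hg
  choose ρ hρ using href
  choose ρ' hρ' using href'
  have hfinS : {a | Γ a ≠ ⊥}.Finite :=
    WellFoundedGT.finite_ne_bot_of_iSupIndep hΓ.submodule_iSupIndep
  have hfinS' : {a | Γ' a ≠ ⊥}.Finite :=
    WellFoundedGT.finite_ne_bot_of_iSupIndep hΓ'.submodule_iSupIndep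
  set S : Finset A := hfinS.toFinset with hSdef
  set S' : Finset A := hfinS'.toFinset with hS'def
  have hSmem : ∀ a, a ∈ S ↔ Γ a ≠ ⊥ := fun a => hfinS.mem_toFinset
  have hS'mem : ∀ a, a ∈ S' ↔ Γ' a ≠ ⊥ := fun a => hfinS'.mem_toFinset
  have hπbot : ∀ a (x : L), Γ a = ⊥ → π a x = 0 := by
    intro a x h
    have := hmem a x; rwa [h, Submodule.mem_bot] at this
  have hπ'bot : ∀ a (x : L), Γ' a = ⊥ → π' a x = 0 := by
    intro a x h
    have := hmem' a x; rwa [h, Submodule.mem_bot] at this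
  have hsuppπ : ∀ a (x : L), π a x ≠ 0 → a ∈ S :=
    fun a x h => (hSmem a).mpr (fun h0 => h (hπbot a x h0))
  have hsuppπ' : ∀ a (x : L), π' a x ≠ 0 → a ∈ S' :=
    fun a x h => (hS'mem a).mpr (fun h0 => h (hπ'bot a x h0))
  have stab : ∀ (r' : ZMod n) (a : A) (x : L), x ∈ g r' → π a x ∈ g r' :=
    fun r' a x hx => proj_stab g πg hgid hgne Γ π hmem hid hne hsum ρ hρ r' x hx a
  have stab' : ∀ (r' : ZMod n) (a : A) (x : L), x ∈ g r' → π' a x ∈ g r' :=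
    fun r' a x hx => proj_stab g πg hgid hgne Γ' π' hmem' hid' hne' hsum' ρ' hρ' r' x hx a
  have comm : ∀ (c : A) (v : L), v ∈ Γ c → ∀ (d : A) (x : L),
      π d ⁅v, x⁆ = ⁅v, π (c⁻¹ * d) x⁆ :=
    fun c v hv d x => proj_lie Γ π hmem hid hne hsum hΓgrad c v hv d x
  have comm' : ∀ (c : A) (v : L), v ∈ Γ' c → ∀ (d : A) (x : L),
      π' d ⁅v, x⁆ = ⁅v, π' (c⁻¹ * d) x⁆ :=
    fun c v hv d x => proj_lie Γ' π' hmem' hid' hne' hsum' hΓ'grad c v hv d x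
  have hmemc : ∀ (c : A) (u : L), u ∈ g 0 → π c u ∈ Γ' c := by
    intro c u hu
    have h1 : π c u ∈ Γ c ⊓ g 0 := Submodule.mem_inf.mpr ⟨hmem c u, stab 0 c u hu⟩
    rw [hagree c] at h1
    exact (Submodule.mem_inf.mp h1).1
  have lie_sum' : ∀ (w : L) (u : Finset A) (fn : A → L),
      ⁅w, ∑ b ∈ u, fn b⁆ = ∑ b ∈ u, ⁅w, fn b⁆ := by
    intro w u fn
    induction u using Finset.induction with
    | empty => simp
    | insert _ _ h ih => rw [Finset.sum_insert h, Finset.sum_insert h, lie_add, ih]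
  have sum_lie' : ∀ (w : L) (u : Finset A) (fn : A → L),
      ⁅∑ b ∈ u, fn b, w⁆ = ∑ b ∈ u, ⁅fn b, w⁆ := by
    intro w u fn
    induction u using Finset.induction with
    | empty => simp
    | insert _ _ h ih => rw [Finset.sum_insert h, Finset.sum_insert h, add_lie, ih]
  set T : Finset A := (S' ×ˢ S).image (fun p => p.1 * p.2⁻¹) with hT
  set f : A → (L →ₗ[F] L) := fun s => ∑ a ∈ S, (π' (s * a)) ∘ₗ (π a) with hf
  have hfapp : ∀ s x, f s x = ∑ a ∈ S, π' (s * a) (π a x) := by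
    intro s x
    simp [hf, LinearMap.sum_apply, LinearMap.comp_apply]
  have hF1 : ∀ s, ∀ x ∈ g r, f s x ∈ g r := by
    intro s x hx
    rw [hfapp]
    exact Submodule.sum_mem _ (fun a _ => stab' r (s * a) _ (stab r a x hx))
  have hF2 : ∀ x : L, ∑ s ∈ T, f s x = x := by
    intro x
    have h1 : ∑ s ∈ T, f s x = ∑ a ∈ S, ∑ s ∈ T, π' (s * a) (π a x) := by
      simp_rw [hfapp]
      rw [Finset.sum_comm]
    rw [h1]
    have hinner : ∀ a ∈ S, ∑ s ∈ T, π' (s * a) (π a x) = π a x := by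
      intro a ha
      have hinj : ∀ s1 ∈ T, ∀ s2 ∈ T, s1 * a = s2 * a → s1 = s2 :=
        fun s1 _ s2 _ h => mul_right_cancel h
      calc ∑ s ∈ T, π' (s * a) (π a x)
          = ∑ b ∈ T.image (fun s => s * a), π' b (π a x) :=
            (Finset.sum_image (f := fun b => π' b (π a x)) hinj).symm
        _ = π a x := by
            apply sum_proj_of_support π' hsum' (π a x)
            intro b hb
            refine Finset.mem_image.mpr ⟨b * a⁻¹, ?_, by group⟩
            exact Finset.mem_image.mpr
              ⟨(b, a), Finset.mem_product.mpr ⟨hsuppπ' b _ hb, ha⟩, rfl⟩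
    rw [Finset.sum_congr rfl hinner]
    exact sum_proj_of_support π hsum x S (fun a ha => hsuppπ a x ha)
  -- equivariance for homogeneous elements
  have hequiv1 : ∀ (s c : A) (v : L), v ∈ Γ c → v ∈ Γ' c → ∀ x : L,
      f s ⁅v, x⁆ = ⁅v, f s x⁆ := by
    intro s c v hvc hvc' x
    set Q : A → L := fun b => ⁅v, π' (s * b) (π b x)⁆ with hQ
    have halt : ∀ b, Q b = π' (c * (s * b)) (π (c * b) ⁅v, x⁆) := by
      intro b
      calc Q b = ⁅v, π' (s * b) (π b x)⁆ := by rw [hQ]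
        _ = ⁅v, π' (c⁻¹ * (c * (s * b))) (π (c⁻¹ * (c * b)) x)⁆ := by
            rw [inv_mul_cancel_left, inv_mul_cancel_left]
        _ = π' (c * (s * b)) ⁅v, π (c⁻¹ * (c * b)) x⁆ := (comm' c v hvc' _ _).symm
        _ = π' (c * (s * b)) (π (c * b) ⁅v, x⁆) := by rw [← comm c v hvc (c * b) x]
    have hL : f s ⁅v, x⁆ = ∑ a ∈ S, Q (c⁻¹ * a) := by
      rw [hfapp]
      apply Finset.sum_congr rfl
      intro a _
      calc π' (s * a) (π a ⁅v, x⁆)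
          = π' (s * a) ⁅v, π (c⁻¹ * a) x⁆ := by rw [comm c v hvc a x]
        _ = ⁅v, π' (c⁻¹ * (s * a)) (π (c⁻¹ * a) x)⁆ := comm' c v hvc' (s * a) _
        _ = Q (c⁻¹ * a) := by rw [hQ, mul_left_comm]
    have hR : ⁅v, f s x⁆ = ∑ a ∈ S, Q a := by
      rw [hfapp, lie_sum']
    rw [hL, hR]
    have hinj : ∀ a1 ∈ S, ∀ a2 ∈ S, c⁻¹ * a1 = c⁻¹ * a2 → a1 = a2 :=
      fun a1 _ a2 _ h => mul_left_cancel h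
    calc ∑ a ∈ S, Q (c⁻¹ * a)
        = ∑ b ∈ S.image (fun a => c⁻¹ * a), Q b := (Finset.sum_image (f := Q) hinj).symm
      _ = ∑ a ∈ S, Q a := by
          apply sum_congr_support Q
          · intro b hb
            have hpi : π (c * b) ⁅v, x⁆ ≠ 0 := fun h => hb (by rw [halt b, h, map_zero])
            refine Finset.mem_image.mpr ⟨c * b, hsuppπ _ _ hpi, by rw [inv_mul_cancel_left]⟩
          · intro b hb
            have hpi : π b x ≠ 0 := fun h => hb (by rw [hQ]; simp only; rw [h, map_zero, lie_zero])
            exact hsuppπ b x hpi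
  have hequiv : ∀ s, ∀ u ∈ g 0, ∀ x ∈ g r, f s ⁅u, x⁆ = ⁅u, f s x⁆ := by
    intro s u hu x _
    obtain ⟨t, hus, huout⟩ := hsum u
    conv_lhs => rw [hus]
    rw [sum_lie', map_sum]
    conv_rhs => rw [hus]
    rw [sum_lie']
    apply Finset.sum_congr rfl
    intro c _
    exact hequiv1 s c (π c u) (hmem c u) (hmemc c u hu) x
  have hUV : ∀ u ∈ g 0, ∀ x ∈ g r, ⁅u, x⁆ ∈ g r := by
    intro u hu x hx
    have := hgrad 0 r u hu x hx
    rwa [zero_add] at this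
  choose cv hcv using fun s : A =>
    schur_aux (g r) (g 0) hrne hirr hUV (f s) (hF1 s) (hequiv s)
  obtain ⟨x0, hx0mem, hx0ne⟩ := (Submodule.ne_bot_iff (g r)).mp hrne
  have hsum1 : (∑ s ∈ T, cv s) = 1 := by
    have h1 : x0 = (∑ s ∈ T, cv s) • x0 := by
      conv_lhs => rw [← hF2 x0]
      rw [Finset.sum_smul]
      exact Finset.sum_congr rfl (fun s _ => hcv s x0 hx0mem)
    by_contra hcon
    have h2 : ((∑ s ∈ T, cv s) - 1) • x0 = 0 := by
      rw [sub_smul, one_smul, ← h1, sub_self]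
    rcases smul_eq_zero.mp h2 with h | h
    · exact hcon (sub_eq_zero.mp h)
    · exact hx0ne h
  have hex : ∃ s ∈ T, cv s ≠ 0 := by
    by_contra hcon
    push_neg at hcon
    rw [Finset.sum_eq_zero hcon] at hsum1
    exact one_ne_zero hsum1.symm
  obtain ⟨s0, _, hs0ne⟩ := hex
  refine ⟨s0, ?_, ?_⟩
  · obtain ⟨t, hxs, hout⟩ := hsum x0
    have hex2 : ∃ a, π a x0 ≠ 0 := by
      by_contra hcon
      push_neg at hcon
      exact hx0ne (by rw [hxs]; exact Finset.sum_eq_zero (fun a _ => hcon a))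
    obtain ⟨a, ha⟩ := hex2
    refine ⟨a, fun h0 => ha ?_⟩
    have hmem2 : π a x0 ∈ Γ a ⊓ g r :=
      Submodule.mem_inf.mpr ⟨hmem a x0, stab r a x0 hx0mem⟩
    rw [h0, Submodule.mem_bot] at hmem2
    exact hmem2
  · intro a x hx
    rw [Submodule.mem_inf] at hx
    obtain ⟨hxa, hxr⟩ := hx
    by_cases haS : a ∈ S
    · have hfx : f s0 x = π' (s0 * a) x := by
        rw [hfapp, Finset.sum_eq_single_of_mem a haS]
        · rw [hid a x hxa]
        · intro b _ hba
          rw [hne b a x hxa hba, map_zero]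
      have hcx : cv s0 • x = π' (s0 * a) x := by rw [← hcv s0 x hxr, hfx]
      have h1 : π' (s0 * a) x ∈ Γ' (s0 * a) ⊓ g r :=
        Submodule.mem_inf.mpr ⟨hmem' _ x, stab' r _ x hxr⟩
      have h2 : x = (cv s0)⁻¹ • ((cv s0) • x) := by
        rw [smul_smul, inv_mul_cancel₀ hs0ne, one_smul]
      rw [h2, hcx]
      exact Submodule.smul_mem _ _ h1
    · have h0 : Γ a = ⊥ := not_not.mp (fun h => haS ((hSmem a).mpr h))
      rw [h0, Submodule.mem_bot] at hxa
      exact hxa ▸ zero_mem _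

theorem stmt14 (F : Type) [Field F] [IsAlgClosed F] [CharZero F]
    (n : ℕ) (hn : 2 ≤ n)
    (L : Type) [LieRing L] [LieAlgebra F L] [FiniteDimensional F L]
    [LieAlgebra.IsSemisimple F L]
    -- the ℤₙ-grading on L
    (g : ZMod n → Submodule F L) (hg : DirectSum.IsInternal g)
    (hgrad : ∀ r s : ZMod n, ∀ x ∈ g r, ∀ y ∈ g s, ⁅x, y⁆ ∈ g (r + s))
    -- L₀ is a (semisimple) subalgebra
    (g0 : LieSubalgebra F L) (hg0 : g0.toSubmodule = g 0)
    (hg0ss : LieAlgebra.IsSemisimple F ↥g0)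
    -- each Lᵣ, r ≠ 0, is a nonzero irreducible L₀-module
    (hirr : ∀ r : ZMod n, r ≠ 0 → g r ≠ ⊥ ∧
      ∀ W : Submodule F L, W ≤ g r → (∀ x ∈ g0, ∀ w ∈ W, ⁅x, w⁆ ∈ W) →
        W = ⊥ ∨ W = g r)
    -- two A-gradings refining the ℤₙ-grading and agreeing on L₀
    (A : Type) [CommGroup A] [DecidableEq A]
    (Γ Γ' : A → Submodule F L)
    (hΓ : DirectSum.IsInternal Γ) (hΓ' : DirectSum.IsInternal Γ')
    (hΓgrad : ∀ a b : A, ∀ x ∈ Γ a, ∀ y ∈ Γ b, ⁅x, y⁆ ∈ Γ (a * b))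
    (hΓ'grad : ∀ a b : A, ∀ x ∈ Γ' a, ∀ y ∈ Γ' b, ⁅x, y⁆ ∈ Γ' (a * b))
    (href : ∀ a : A, ∃ r : ZMod n, Γ a ≤ g r)
    (href' : ∀ a : A, ∃ r : ZMod n, Γ' a ≤ g r)
    (hagree : ∀ a : A, Γ a ⊓ g 0 = Γ' a ⊓ g 0) :
    -- the gradings differ only by shifts on the components of the ℤₙ-grading
    ∀ r : ZMod n, ∃ s : A, ∀ a : A, Γ' a ⊓ g r = Γ (s * a) ⊓ g r := by
  intro r
  by_cases hr : r = 0
  · refine ⟨1, fun a => ?_⟩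
    rw [hr, one_mul, hagree a]
  · obtain ⟨hrne, hW⟩ := hirr r hr
    have hirr' : ∀ W : Submodule F L, W ≤ g r →
        (∀ x ∈ g 0, ∀ w ∈ W, ⁅x, w⁆ ∈ W) → W = ⊥ ∨ W = g r := by
      intro W hle hcl
      refine hW W hle ?_
      intro x hx w hw
      refine hcl x ?_ w hw
      rw [← hg0]
      exact (LieSubalgebra.mem_toSubmodule g0).mpr hx
    obtain ⟨s, ⟨a0, ha0⟩, hs⟩ := key_lemma g hg hgrad r hrne hirr' Γ Γ'
      hΓ hΓ' hΓgrad hΓ'grad href href' hagree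
    obtain ⟨s', _, hs'⟩ := key_lemma g hg hgrad r hrne hirr' Γ' Γ
      hΓ' hΓ hΓ'grad hΓgrad href' href (fun a => (hagree a).symm)
    have hchain : Γ a0 ⊓ g r ≤ Γ (s' * (s * a0)) ⊓ g r :=
      le_trans (hs a0) (hs' (s * a0))
    have heq : s' * (s * a0) = a0 := by
      by_contra hne2
      have hdisj : Disjoint (Γ a0) (Γ (s' * (s * a0))) :=
        hΓ.submodule_iSupIndep.pairwiseDisjoint (fun h => hne2 h.symm)
      refine ha0 (le_bot_iff.mp ?_)
      calc Γ a0 ⊓ g r ≤ Γ a0 ⊓ Γ (s' * (s * a0)) :=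
            le_inf inf_le_left (hchain.trans inf_le_left)
        _ = ⊥ := disjoint_iff.mp hdisj
    have hss' : s * s' = 1 := by
      rw [← mul_assoc] at heq
      rw [mul_comm]
      exact mul_right_cancel (by rw [heq, one_mul])
    refine ⟨s', fun a => le_antisymm (hs' a) ?_⟩
    have h2 := hs (s' * a)
    have he : s * (s' * a) = a := by rw [← mul_assoc, hss', one_mul]
    rwa [he] at h2
end

section
/- Let F be an algebraically closed field of characteristic 0 and let ω ∈ F be a primitive 8th root of unity. Let U be a 2-dimensional and V an 8-dimensional F-vector space. For a ∈ SL(U) and b ∈ SL(V), the induced linear map a ⊗ Λ²(b) on U ⊗ Λ²V equals the identity if and only if (a, b) lies in the subgroup generated by (−1_U, ω² 1_V). In particular, the kernel of the group homomorphism SL(U) × SL(V) → GL(U ⊗ Λ²V), (a, b) ↦ a ⊗ Λ²(b), is cyclic of order 4, generated by (−1_U, ω² 1_V). -/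
open ExteriorAlgebra

/-- The linear map induced on the `n`-th exterior power by an endomorphism of a module. -/
noncomputable def exteriorPowerMap (n : ℕ) {R M : Type*} [CommRing R] [AddCommGroup M]
    [Module R M] (f : M →ₗ[R] M) : ⋀[R]^n M →ₗ[R] ⋀[R]^n M :=
  (ExteriorAlgebra.map f).toLinearMap.restrict (p := (⋀[R]^n M : Submodule R _))
    (q := (⋀[R]^n M : Submodule R _)) (by
      intro x hx
      have pow_mono : ∀ {S T : Submodule R (ExteriorAlgebra R M)}, S ≤ T →
          ∀ k : ℕ, S ^ k ≤ T ^ k := by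
        intro S T h k
        induction k with
        | zero => simp
        | succ k ih => rw [pow_succ, pow_succ]; exact Submodule.mul_le.mpr fun a ha b hb => Submodule.mul_mem_mul (ih ha) (h hb)
      have key : Submodule.map (ExteriorAlgebra.map f).toLinearMap (⋀[R]^n M) ≤ ⋀[R]^n M := by
        rw [exteriorPower, Submodule.map_pow]
        refine pow_mono ?_ n
        rw [ExteriorAlgebra.ι_range_map_map]
        exact LinearMap.map_le_range
      exact key ⟨x, hx, rfl⟩)

section Aux

variable {F : Type} [Field F] {W : Type} [AddCommGroup W] [Module F W]

lemma exists_dual_family {n : ℕ} {t : Fin n → W} (ht : LinearIndependent F t) :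
    ∃ φ : Fin n → Module.Dual F W, ∀ i j, φ i (t j) = if j = i then 1 else 0 := by
  set S := Submodule.span F (Set.range t) with hS
  obtain ⟨q, hq⟩ := S.exists_isCompl
  let b : Module.Basis (Fin n) F S := Module.Basis.span ht
  let p := S.projectionOnto q hq
  refine ⟨fun i => (b.coord i).comp (p : W →ₗ[F] S), fun i j => ?_⟩
  have htj : t j = ((b j : S) : W) := congrArg Subtype.val (Module.Basis.span_apply ht j).symm
  simp only [LinearMap.comp_apply, htj, p, Submodule.projectionOnto_apply_left hq]
  rw [Module.Basis.coord_apply, Module.Basis.repr_self_apply]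

lemma ιMulti_ne_zero {n : ℕ} {t : Fin n → W} (ht : LinearIndependent F t) :
    ιMulti F n t ≠ (0 : ExteriorAlgebra F W) := by
  obtain ⟨φ, hφ⟩ := exists_dual_family ht
  let g : W →ₗ[F] (Fin n → F) := LinearMap.pi (fun i => φ i)
  let A : W [⋀^Fin n]→ₗ[F] F := (Matrix.detRowAlternating).compLinearMap g
  have hA : A t = 1 := by
    have h1 : (Matrix.of fun i => g (t i)) = (1 : Matrix (Fin n) (Fin n) F) := by
      ext i j
      simp [g, Matrix.one_apply, hφ, eq_comm]
    simp only [A, AlternatingMap.compLinearMap_apply, Matrix.detRowAlternating,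
      AlternatingMap.coe_mk, MultilinearMap.coe_mk]
    change Matrix.det (Matrix.of fun i => g (t i)) = 1
    rw [h1, Matrix.det_one]
  intro h
  have h2 := liftAlternating_apply_ιMulti (R := F) (M := W) (N := F)
    (Function.update (fun i => (0 : W [⋀^Fin i]→ₗ[F] F)) n A) t
  rw [h, map_zero, Function.update_self, hA] at h2
  exact zero_ne_one h2

lemma ιMulti_two (v w : W) : (ιMulti F 2 ![v, w] : ExteriorAlgebra F W) = ι F v * ι F w := by
  rw [ιMulti_apply]
  simp [List.ofFn_succ]

lemma ιMulti_three (t : Fin 3 → W) :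
    (ιMulti F 3 t : ExteriorAlgebra F W) = ι F (t 0) * (ι F (t 1) * ι F (t 2)) := by
  rw [ιMulti_apply]
  simp [List.ofFn_succ, mul_assoc]

lemma smul_id_eq_id_iff [Nontrivial W] {s : F} :
    s • (LinearMap.id : Module.End F W) = LinearMap.id ↔ s = 1 := by
  constructor
  · intro h
    obtain ⟨w, hw⟩ := exists_ne (0 : W)
    have h1 : s • w = w := by
      have := LinearMap.congr_fun h w
      simpa using this
    have h2 : (s - 1) • w = 0 := by rw [sub_smul, one_smul, h1, sub_self]
    rcases smul_eq_zero.mp h2 with h3 | h3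
    · exact sub_eq_zero.mp h3
    · exact absurd h3 hw
  · rintro rfl; rw [one_smul]

lemma eigen_scalar [Nontrivial W] {b : Module.End F W} (h : ∀ v : W, ∃ c : F, b v = c • v) :
    ∃ c : F, b = c • (LinearMap.id : Module.End F W) := by
  obtain ⟨v₀, hv₀⟩ := exists_ne (0 : W)
  obtain ⟨c₀, hc₀⟩ := h v₀
  refine ⟨c₀, LinearMap.ext fun v => ?_⟩
  simp only [LinearMap.smul_apply, LinearMap.id_apply]
  by_cases hv : v = 0
  · simp [hv]
  obtain ⟨c, hc⟩ := h v
  by_cases hmem : v ∈ Submodule.span F {v₀}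
  · obtain ⟨a, ha⟩ := Submodule.mem_span_singleton.mp hmem
    rw [← ha, map_smul, hc₀, smul_comm]
  · have hli : LinearIndependent F ![v, v₀] := by
      rw [linearIndependent_fin2]
      refine ⟨hv₀, fun a ha => hmem ?_⟩
      simp only [Matrix.cons_val_one, Matrix.head_cons, Matrix.cons_val_zero] at ha
      rw [← ha]
      exact Submodule.smul_mem _ _ (Submodule.mem_span_singleton_self v₀)
    obtain ⟨c', hc'⟩ := h (v + v₀)
    have key : c • v + c₀ • v₀ = c' • v + c' • v₀ := by
      rw [← hc, ← hc₀, ← map_add, hc', smul_add]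
    have hrel : (c' - c) • v + (c' - c₀) • v₀ = 0 := by
      calc (c' - c) • v + (c' - c₀) • v₀
          = (c' • v + c' • v₀) - (c • v + c₀ • v₀) := by rw [sub_smul, sub_smul]; abel
        _ = 0 := by rw [← key, sub_self]
    have hco := Fintype.linearIndependent_iff.mp hli ![c' - c, c' - c₀] (by
      rw [Fin.sum_univ_two]
      simpa using hrel)
    have h1 : c' - c = 0 := hco 0
    have h2 : c' - c₀ = 0 := hco 1
    have hcc : c = c₀ := by
      have e1 := sub_eq_zero.mp h1
      have e2 := sub_eq_zero.mp h2
      rw [← e1, ← e2]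
    rw [hc, hcc]

lemma tensor_scalar {U : Type} [AddCommGroup U] [Module F U]
    [Nontrivial U] [Nontrivial W] {a : Module.End F U} {c : Module.End F W}
    (h : TensorProduct.map a c = LinearMap.id) :
    ∃ μ : F, μ ≠ 0 ∧ c = μ • (LinearMap.id : Module.End F W) ∧
      a = μ⁻¹ • (LinearMap.id : Module.End F U) := by
  have key : ∀ (φ : Module.Dual F U) (u : U) (w : W), φ (a u) • c w = φ u • w := by
    intro φ u w
    have h1 : (a u) ⊗ₜ[F] (c w) = u ⊗ₜ[F] w := by
      have := LinearMap.congr_fun h (u ⊗ₜ[F] w)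
      rwa [TensorProduct.map_tmul, LinearMap.id_apply] at this
    have h2 := congrArg (TensorProduct.lift ((LinearMap.lsmul F W).comp φ)) h1
    simpa using h2
  obtain ⟨u₀, hu₀⟩ := exists_ne (0 : U)
  obtain ⟨w₀, hw₀⟩ := exists_ne (0 : W)
  have hφ : ∃ φ : Module.Dual F U, φ u₀ ≠ 0 := by
    by_contra hn
    push_neg at hn
    exact hu₀ ((Module.forall_dual_apply_eq_zero_iff F u₀).mp hn)
  obtain ⟨φ, hφ⟩ := hφ
  have hs : φ (a u₀) ≠ 0 := by
    intro h0
    have := key φ u₀ w₀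
    rw [h0, zero_smul] at this
    rcases smul_eq_zero.mp this.symm with h1 | h1
    · exact hφ h1
    · exact hw₀ h1
  set μ : F := (φ (a u₀))⁻¹ * φ u₀ with hμdef
  have hμ : μ ≠ 0 := mul_ne_zero (inv_ne_zero hs) hφ
  have hc : ∀ w, c w = μ • w := by
    intro w
    have := key φ u₀ w
    rw [hμdef, mul_smul]
    rw [← this, smul_smul, inv_mul_cancel₀ hs, one_smul]
  have ha : ∀ u, a u = μ⁻¹ • u := by
    intro u
    have hdual : ∀ ψ : Module.Dual F U, ψ (μ • a u - u) = 0 := by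
      intro ψ
      have h3 := key ψ u w₀
      rw [hc w₀, smul_smul] at h3
      have h4 : (ψ (a u) * μ - ψ u) • w₀ = 0 := by
        rw [sub_smul, h3, sub_self]
      have h5 : ψ (a u) * μ - ψ u = 0 := by
        rcases smul_eq_zero.mp h4 with h | h
        · exact h
        · exact absurd h hw₀
      rw [map_sub, map_smul, smul_eq_mul, mul_comm]
      exact h5
    have h6 := (Module.forall_dual_apply_eq_zero_iff F (μ • a u - u)).mp hdual
    have h7 : μ • a u = u := by rwa [sub_eq_zero] at h6
    calc a u = μ⁻¹ • (μ • a u) := by rw [smul_smul, inv_mul_cancel₀ hμ, one_smul]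
      _ = μ⁻¹ • u := by rw [h7]
  refine ⟨μ, hμ, LinearMap.ext fun w => ?_, LinearMap.ext fun u => ?_⟩
  · rw [LinearMap.smul_apply, LinearMap.id_apply]; exact hc w
  · rw [LinearMap.smul_apply, LinearMap.id_apply]; exact ha u

lemma end_scalar_of_wedge [FiniteDimensional F W] (hW : 3 ≤ Module.finrank F W)
    {b : Module.End F W} {μ : F} (hμ : μ ≠ 0)
    (H : ∀ v w : W, ι F (b v) * ι F (b w) = μ • (ι F v * ι F w)) :
    ∃ c : F, b = c • (LinearMap.id : Module.End F W) := by
  have : Nontrivial W := Module.nontrivial_of_finrank_pos (R := F) (by omega)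
  apply eigen_scalar
  intro v
  rcases eq_or_ne v 0 with rfl | hv
  · exact ⟨0, by simp⟩
  have hmem : b v ∈ Submodule.span F {v} := by
    by_contra hn
    have hli2 : LinearIndependent F ![b v, v] := by
      rw [linearIndependent_fin2]
      refine ⟨hv, fun a ha => hn ?_⟩
      simp only [Matrix.cons_val_one, Matrix.head_cons, Matrix.cons_val_zero] at ha
      rw [← ha]
      exact Submodule.smul_mem _ _ (Submodule.mem_span_singleton_self v)
    have hspan : Submodule.span F (Set.range ![b v, v]) ≠ ⊤ := by
      intro htop
      have h1 := finrank_span_eq_card hli2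
      rw [htop, finrank_top] at h1
      simp only [Fintype.card_fin] at h1
      omega
    obtain ⟨w, -, hw⟩ := SetLike.exists_of_lt hspan.lt_top
    have hli3 : LinearIndependent F (Fin.snoc ![b v, v] w : Fin 3 → W) :=
      linearIndependent_fin_snoc.mpr ⟨hli2, hw⟩
    have ht : (Fin.snoc ![b v, v] w : Fin 3 → W) = ![b v, v, w] := by
      funext i
      fin_cases i <;> simp [Fin.snoc] <;> rfl
    have hval : (ιMulti F 3 (Fin.snoc ![b v, v] w) : ExteriorAlgebra F W)
        = ι F (b v) * (ι F v * ι F w) := by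
      rw [ht, ιMulti_three]
      simp
    have h0 : ι F (b v) * (ι F v * ι F w) = 0 := by
      have h1 : μ • (ι F (b v) * (ι F v * ι F w)) = 0 := by
        calc μ • (ι F (b v) * (ι F v * ι F w))
            = ι F (b v) * (μ • (ι F v * ι F w)) := (mul_smul_comm _ _ _).symm
          _ = ι F (b v) * (ι F (b v) * ι F (b w)) := by rw [← H]
          _ = 0 := by rw [← mul_assoc, ι_sq_zero, zero_mul]
      rcases smul_eq_zero.mp h1 with h | h
      · exact absurd h hμ
      · exact h
    exact ιMulti_ne_zero hli3 (hval.trans h0)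
  obtain ⟨a, ha⟩ := Submodule.mem_span_singleton.mp hmem
  exact ⟨a, ha.symm⟩

lemma exists_li_pair [FiniteDimensional F W] (h2 : 2 ≤ Module.finrank F W) :
    ∃ v w : W, LinearIndependent F ![v, w] := by
  have : Nontrivial W := Module.nontrivial_of_finrank_pos (R := F) (by omega)
  obtain ⟨v, hv⟩ := exists_ne (0 : W)
  have hspan : Submodule.span F ({v} : Set W) ≠ ⊤ := by
    intro htop
    have h1 := finrank_span_singleton (K := F) hv
    rw [htop, finrank_top] at h1
    omega
  obtain ⟨w, -, hw⟩ := SetLike.exists_of_lt hspan.lt_top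
  refine ⟨w, v, linearIndependent_fin2.mpr ⟨hv, fun a ha => hw ?_⟩⟩
  simp only [Matrix.cons_val_one, Matrix.head_cons, Matrix.cons_val_zero] at ha
  rw [← ha]
  exact Submodule.smul_mem _ _ (Submodule.mem_span_singleton_self v)

lemma exteriorPowerMap_smul_id (s : F) :
    exteriorPowerMap 2 (s • (LinearMap.id : Module.End F W))
      = (s ^ 2) • (LinearMap.id : ⋀[F]^2 W →ₗ[F] ⋀[F]^2 W) := by
  have main : ∀ y ∈ Submodule.span F (Set.range (ιMulti F 2 (M := W))),
      ExteriorAlgebra.map (s • (LinearMap.id : Module.End F W)) y = (s ^ 2) • y := by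
    intro y hy
    induction hy using Submodule.span_induction with
    | mem y hy =>
      obtain ⟨t, rfl⟩ := hy
      rw [map_apply_ιMulti]
      have ht : ((s • (LinearMap.id : Module.End F W)) ∘ t) = fun i => s • t i := rfl
      rw [ht]
      have hmulti := MultilinearMap.map_smul_univ
        (ιMulti F 2 (M := W)).toMultilinearMap (fun _ : Fin 2 => s) t
      simp only [AlternatingMap.coe_multilinearMap] at hmulti
      rw [hmulti, Finset.prod_const, Finset.card_univ, Fintype.card_fin]
    | zero => simp
    | add x y _ _ hx hy => rw [map_add, hx, hy, smul_add]
    | smul a x _ hx => rw [map_smul, hx, smul_comm]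
  apply LinearMap.ext
  intro x
  apply Subtype.ext
  have hx : (x : ExteriorAlgebra F W) ∈ Submodule.span F (Set.range (ιMulti F 2)) := by
    rw [ιMulti_span_fixedDegree]; exact x.2
  calc ((exteriorPowerMap 2 (s • (LinearMap.id : Module.End F W)) x : ⋀[F]^2 W)
        : ExteriorAlgebra F W)
      = ExteriorAlgebra.map (s • (LinearMap.id : Module.End F W)) (x : ExteriorAlgebra F W) :=
        LinearMap.restrict_coe_apply _ _ _
    _ = (s ^ 2) • (x : ExteriorAlgebra F W) := main _ hx
    _ = (((s ^ 2) • (LinearMap.id : ⋀[F]^2 W →ₗ[F] ⋀[F]^2 W)) x : ExteriorAlgebra F W) := by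
        simp

end Aux

theorem stmt16 (F U V : Type) [Field F] [IsAlgClosed F] [CharZero F]
    [AddCommGroup U] [Module F U] [FiniteDimensional F U]
    [AddCommGroup V] [Module F V] [FiniteDimensional F V]
    (hU : Module.finrank F U = 2) (hV : Module.finrank F V = 8)
    (ω : F) (hω : IsPrimitiveRoot ω 8) :
    (∀ (a : Module.End F U) (b : Module.End F V), LinearMap.det a = 1 → LinearMap.det b = 1 →
      (TensorProduct.map a (exteriorPowerMap 2 b) = LinearMap.id ↔
        ∃ k : ℕ, a = ((-1 : F) ^ k) • (LinearMap.id : Module.End F U) ∧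
          b = (ω ^ (2 * k)) • (LinearMap.id : Module.End F V))) ∧
    (∀ k : ℕ,
      (((-1 : F) ^ k) • (LinearMap.id : Module.End F U) = LinearMap.id ∧
        (ω ^ (2 * k)) • (LinearMap.id : Module.End F V) = LinearMap.id) ↔ (4 : ℕ) ∣ k) := by
  have hUnt : Nontrivial U := Module.nontrivial_of_finrank_pos (R := F) (by omega)
  have hVnt : Nontrivial V := Module.nontrivial_of_finrank_pos (R := F) (by omega)
  have h4 : ω ^ 4 = -1 :=
    (hω.pow (by norm_num) (by norm_num : 8 = 4 * 2)).eq_neg_one_of_two_right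
  have hω2 : IsPrimitiveRoot (ω ^ 2) 4 := hω.pow (by norm_num) (by norm_num : 8 = 2 * 4)
  constructor
  · intro a b hdeta hdetb
    constructor
    · intro h
      -- a nonzero element of ⋀² V
      obtain ⟨t0, t1, hli⟩ := exists_li_pair (F := F) (W := V) (by omega)
      have hxne : ι F t0 * ι F t1 ≠ (0 : ExteriorAlgebra F V) := by
        rw [← ιMulti_two]
        exact ιMulti_ne_zero hli
      have hxmem : ι F t0 * ι F t1 ∈ ⋀[F]^2 V := by
        rw [← ιMulti_two]
        exact ιMulti_range F 2 (Set.mem_range_self _)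
      have hWnt : Nontrivial (⋀[F]^2 V) := by
        refine nontrivial_of_ne ⟨ι F t0 * ι F t1, hxmem⟩ 0 fun hz => hxne ?_
        exact congrArg Subtype.val hz
      obtain ⟨μ, hμ, hcid, haid⟩ := tensor_scalar h
      have H : ∀ v w : V, ι F (b v) * ι F (b w) = μ • (ι F v * ι F w) := by
        intro v w
        have hm : ι F v * ι F w ∈ ⋀[F]^2 V := by
          rw [← ιMulti_two]
          exact ιMulti_range F 2 (Set.mem_range_self _)
        have happ := LinearMap.congr_fun hcid ⟨ι F v * ι F w, hm⟩
        have hval := congrArg Subtype.val happ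
        simp only [exteriorPowerMap, LinearMap.restrict_coe_apply, LinearMap.smul_apply,
          LinearMap.id_apply, SetLike.val_smul] at hval
        simp only [AlgHom.toLinearMap_apply, map_mul, map_apply_ι] at hval
        exact hval
      have hdet2 : μ⁻¹ ^ 2 = 1 := by
        rw [haid, LinearMap.det_smul, hU, LinearMap.det_id, mul_one] at hdeta
        exact hdeta
      have hμ2 : μ ^ 2 = 1 := by
        rw [inv_pow, inv_eq_one] at hdet2
        exact hdet2
      obtain ⟨c0, hb⟩ := end_scalar_of_wedge (by omega) hμ H
      have hc0 : c0 ^ 2 = μ := by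
        have hH := H t0 t1
        rw [hb] at hH
        simp only [LinearMap.smul_apply, LinearMap.id_apply, map_smul] at hH
        rw [smul_mul_smul_comm] at hH
        have hz : (c0 * c0 - μ) • (ι F t0 * ι F t1) = 0 := by
          rw [sub_smul, hH, sub_self]
        rcases smul_eq_zero.mp hz with hzz | hzz
        · rw [pow_two]; exact sub_eq_zero.mp hzz
        · exact absurd hzz hxne
      have hc04 : c0 ^ 4 = 1 := by
        rw [show (4 : ℕ) = 2 * 2 from rfl, pow_mul, hc0, hμ2]
      obtain ⟨k, hk4, hkc⟩ := hω2.eq_pow_of_pow_eq_one hc04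
      have hμk : μ = (-1 : F) ^ k := by
        rw [← hc0, ← hkc]
        calc ((ω ^ 2) ^ k) ^ 2 = (ω ^ 4) ^ k := by ring
          _ = (-1 : F) ^ k := by rw [h4]
      refine ⟨k, ?_, ?_⟩
      · rw [haid]
        have hinv : μ⁻¹ = μ :=
          inv_eq_of_mul_eq_one_right (by rw [← pow_two, hμ2])
        rw [hinv, hμk]
      · rw [hb, ← hkc, ← pow_mul]
    · rintro ⟨k, ha, hb⟩
      rw [ha, hb, exteriorPowerMap_smul_id, TensorProduct.map_smul_left,
        TensorProduct.map_smul_right, TensorProduct.map_id, smul_smul]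
      have hpow : (ω ^ (2 * k)) ^ 2 = (-1 : F) ^ k := by
        calc (ω ^ (2 * k)) ^ 2 = (ω ^ 4) ^ k := by ring
          _ = (-1 : F) ^ k := by rw [h4]
      rw [hpow]
      have : ((-1 : F) ^ k) * ((-1 : F) ^ k) = 1 := by
        rw [← pow_add, ← two_mul, pow_mul, neg_one_sq, one_pow]
      rw [this, one_smul]
  · intro k
    rw [smul_id_eq_id_iff, smul_id_eq_id_iff]
    constructor
    · rintro ⟨h1, h2⟩
      have h8 : (8 : ℕ) ∣ 2 * k := (hω.pow_eq_one_iff_dvd (2 * k)).mp h2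
      obtain ⟨m, hm⟩ := h8
      exact ⟨m, by omega⟩
    · rintro ⟨m, rfl⟩
      constructor
      · rw [show 4 * m = 2 * (2 * m) from by ring, pow_mul, neg_one_sq, one_pow]
      · rw [hω.pow_eq_one_iff_dvd]
        exact ⟨m, by ring⟩
end

section
/- Let W = 𝔽₂¹⁰ with the standard bilinear form x • y = Σ_{i=1}^{10} x_i y_i, let 𝟙 = (1, 1, …, 1) ∈ W, and let K = 𝔽₂·𝟙, so K ⊆ K^⊥ and • induces a nondegenerate alternating bilinear form on the 8-dimensional space K^⊥/K. For x ∈ W let wt(x) denote its Hamming weight, and for x ∈ K^⊥ let x̄ denote its class in K^⊥/K. Let ε₁, …, ε₁₀ be the standard basis of W. Then: (a) the 2-dimensional subspace U = span{ (ε₁+ε₂+ε₃+ε₄)^̄, (ε₃+ε₄+ε₅+ε₆)^̄ } of K^⊥/K is totally isotropic and no nonzero element of U is the class x̄ of a vector x of weight 2; and (b) if U' is any 2-dimensional totally isotropic subspace of K^⊥/K such that no nonzero element of U' is the class of a weight-2 vector, then there is a permutation σ of the coordinates {1, …, 10} carrying U' onto U. That is, up to permutation of the 10 coordinates, U is the unique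 such subspace. -/
/-- The Hamming weight of a vector in `𝔽₂¹⁰`. -/
def wt (x : Fin 10 → ZMod 2) : ℕ := (Finset.univ.filter fun i => x i ≠ 0).card

/-- The standard bilinear form `x • y = ∑ xᵢ yᵢ` on `𝔽₂¹⁰`. -/
def dotForm (x y : Fin 10 → ZMod 2) : ZMod 2 := ∑ i, x i * y i

/-- The all-ones vector `𝟙`, spanning `K`. -/
def allOnes : Fin 10 → ZMod 2 := fun _ => 1

/-- We encode a subspace `Ū` of `K^⊥/K` by its full preimage `U` in `𝔽₂¹⁰`, a subspace
containing `𝟙 = allOnes` (so `K ≤ U`). The conditions: `U ≤ K^⊥` (every element is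
orthogonal to `𝟙`); `Ū` is 2-dimensional (`U` is 3-dimensional, since `dim K = 1`);
`Ū` is totally isotropic for the induced form (representatives pairwise orthogonal);
and no nonzero element of `Ū` is the class of a weight-2 vector (no weight-2 vector lies
in `U`; recall the class of a weight-2 vector equals the class of its complement, a
weight-8 vector, and `U` contains with any `x` also `x + 𝟙`). -/
def GoodSubspace (U : Submodule (ZMod 2) (Fin 10 → ZMod 2)) : Prop :=
  allOnes ∈ U ∧
  (∀ x ∈ U, dotForm x allOnes = 0) ∧
  Module.finrank (ZMod 2) U = 3 ∧
  (∀ x ∈ U, ∀ y ∈ U, dotForm x y = 0) ∧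
  (∀ x ∈ U, wt x ≠ 2)

/-- The vector `ε₁ + ε₂ + ε₃ + ε₄`. -/
def v₁₂₃₄ : Fin 10 → ZMod 2 := fun i => if (i : ℕ) < 4 then 1 else 0

/-- The vector `ε₃ + ε₄ + ε₅ + ε₆`. -/
def v₃₄₅₆ : Fin 10 → ZMod 2 := fun i => if 2 ≤ (i : ℕ) ∧ (i : ℕ) < 6 then 1 else 0

/-- The distinguished subspace `U` (the preimage in `𝔽₂¹⁰` of
`span{(ε₁+ε₂+ε₃+ε₄)^̄, (ε₃+ε₄+ε₅+ε₆)^̄} ⊆ K^⊥/K`). -/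
def distinguishedU : Submodule (ZMod 2) (Fin 10 → ZMod 2) :=
  Submodule.span (ZMod 2) {allOnes, v₁₂₃₄, v₃₄₅₆}

/-! ### Auxiliary lemmas -/

lemma zmod2_cases (c : ZMod 2) : c = 0 ∨ c = 1 := by fin_cases c <;> [exact Or.inl rfl; exact Or.inr rfl]

lemma mem_span_triple {u v w x : Fin 10 → ZMod 2} :
    x ∈ Submodule.span (ZMod 2) {u, v, w} ↔
      ∃ a b c : ZMod 2, x = a • u + b • v + c • w := by
  constructor
  · intro hx
    rw [show ({u, v, w} : Set (Fin 10 → ZMod 2)) = insert u (insert v {w}) from rfl,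
      Submodule.mem_span_insert] at hx
    obtain ⟨a, z, hz, rfl⟩ := hx
    rw [Submodule.mem_span_insert] at hz
    obtain ⟨b, z', hz', rfl⟩ := hz
    rw [Submodule.mem_span_singleton] at hz'
    obtain ⟨c, rfl⟩ := hz'
    exact ⟨a, b, c, by rw [add_assoc]⟩
  · rintro ⟨a, b, c, rfl⟩
    have hu : u ∈ Submodule.span (ZMod 2) {u, v, w} := Submodule.subset_span (by simp)
    have hv : v ∈ Submodule.span (ZMod 2) {u, v, w} := Submodule.subset_span (by simp)
    have hw : w ∈ Submodule.span (ZMod 2) {u, v, w} := Submodule.subset_span (by simp)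
    exact add_mem (add_mem (Submodule.smul_mem _ _ hu) (Submodule.smul_mem _ _ hv))
      (Submodule.smul_mem _ _ hw)

lemma wt_eq_card_one (x : Fin 10 → ZMod 2) :
    wt x = (Finset.univ.filter fun i => x i = 1).card := by
  unfold wt; congr 1; ext i
  have : ∀ c : ZMod 2, c ≠ 0 ↔ c = 1 := by decide
  simp [this]

lemma sum_eq_wt (x : Fin 10 → ZMod 2) : ∑ i, x i = (wt x : ZMod 2) := by
  rw [wt_eq_card_one,
    ← Finset.sum_filter_add_sum_filter_not Finset.univ (fun i => x i = 1) x]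
  have h1 : ∑ i ∈ Finset.univ.filter (fun i => x i = 1), x i
      = ((Finset.univ.filter (fun i => x i = 1)).card : ZMod 2) := by
    rw [Finset.sum_congr rfl (fun i hi => (Finset.mem_filter.mp hi).2)]
    simp
  have h2 : ∑ i ∈ Finset.univ.filter (fun i => ¬ x i = 1), x i = 0 := by
    refine Finset.sum_eq_zero fun i hi => ?_
    have := (Finset.mem_filter.mp hi).2
    have h : ∀ c : ZMod 2, ¬ c = 1 → c = 0 := by decide
    exact h _ this
  rw [h1, h2, add_zero]

lemma wt_parity {x : Fin 10 → ZMod 2} (h : dotForm x allOnes = 0) : 2 ∣ wt x := by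
  have he : dotForm x allOnes = ∑ i, x i := by
    unfold dotForm allOnes; simp
  rw [he, sum_eq_wt] at h
  exact (ZMod.natCast_eq_zero_iff _ _).mp h

lemma dotForm_eq_card (x y : Fin 10 → ZMod 2) :
    dotForm x y = ((Finset.univ.filter fun i => x i = 1 ∧ y i = 1).card : ZMod 2) := by
  unfold dotForm
  rw [← Finset.sum_filter_add_sum_filter_not Finset.univ (fun i => x i = 1 ∧ y i = 1)
    (fun i => x i * y i)]
  have h1 : ∑ i ∈ Finset.univ.filter (fun i => x i = 1 ∧ y i = 1), x i * y i
      = ((Finset.univ.filter (fun i => x i = 1 ∧ y i = 1)).card : ZMod 2) := by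
    rw [Finset.sum_congr rfl (fun i hi => by
      obtain ⟨ha, hb⟩ := (Finset.mem_filter.mp hi).2
      rw [ha, hb, one_mul])]
    simp
  have h2 : ∑ i ∈ Finset.univ.filter (fun i => ¬(x i = 1 ∧ y i = 1)), x i * y i = 0 := by
    refine Finset.sum_eq_zero fun i hi => ?_
    have := (Finset.mem_filter.mp hi).2
    have h : ∀ c d : ZMod 2, ¬(c = 1 ∧ d = 1) → c * d = 0 := by decide
    exact h _ _ this
  rw [h1, h2, add_zero]

lemma wt_add_allOnes (x : Fin 10 → ZMod 2) : wt (x + allOnes) = 10 - wt x := by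
  have key : (Finset.univ.filter fun i => (x + allOnes) i ≠ 0)
      = (Finset.univ.filter fun i => ¬ x i ≠ 0) := by
    ext i
    have : ∀ c : ZMod 2, c + 1 ≠ 0 ↔ ¬ c ≠ 0 := by decide
    simp only [Finset.mem_filter, Finset.mem_univ, true_and, Pi.add_apply, allOnes]
    exact (Finset.mem_filter.trans (and_iff_right (Finset.mem_univ i))).trans (by simpa using this (x i))
  have h := Finset.card_filter_add_card_filter_not (s := Finset.univ)
    (p := fun i : Fin 10 => x i ≠ 0)
  unfold wt
  rw [key]
  simp only [Finset.card_univ, Fintype.card_fin] at h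
  omega

lemma wt_le_ten (x : Fin 10 → ZMod 2) : wt x ≤ 10 := by
  have := Finset.card_filter_le Finset.univ (fun i => x i ≠ 0)
  simpa [wt] using this

lemma eq_zero_of_wt_eq_zero {x : Fin 10 → ZMod 2} (h : wt x = 0) : x = 0 := by
  unfold wt at h
  rw [Finset.card_eq_zero, Finset.filter_eq_empty_iff] at h
  funext i
  have := h (Finset.mem_univ i)
  simpa using this

lemma eq_allOnes_of_wt_eq_ten {x : Fin 10 → ZMod 2} (h : wt x = 10) : x = allOnes := by
  unfold wt at h
  have huniv : (Finset.univ.filter fun i => x i ≠ 0) = Finset.univ := by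
    apply Finset.eq_univ_of_card
    simpa using h
  funext i
  have hxi : x i ≠ 0 := by
    have hm : i ∈ Finset.univ.filter fun i => x i ≠ 0 := by
      rw [huniv]; exact Finset.mem_univ i
    exact (Finset.mem_filter.mp hm).2
  have h1 : ∀ c : ZMod 2, c ≠ 0 → c = 1 := by decide
  exact h1 _ hxi

lemma wt_split (x y : Fin 10 → ZMod 2) :
    wt x = (Finset.univ.filter fun i => x i = 1 ∧ y i = 1).card
      + (Finset.univ.filter fun i => x i = 1 ∧ y i = 0).card := by
  rw [wt_eq_card_one]
  have h := Finset.card_filter_add_card_filter_not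
    (s := Finset.univ.filter fun i => x i = 1) (p := fun i : Fin 10 => y i = 1)
  rw [Finset.filter_filter, Finset.filter_filter] at h
  rw [← h]
  congr 2
  ext i
  have : ∀ c : ZMod 2, ¬ c = 1 ↔ c = 0 := by decide
  simp [this]

lemma wt_add_split (x y : Fin 10 → ZMod 2) :
    wt (x + y) = (Finset.univ.filter fun i => x i = 1 ∧ y i = 0).card
      + (Finset.univ.filter fun i => x i = 0 ∧ y i = 1).card := by
  rw [wt_eq_card_one]
  have hpred : (Finset.univ.filter fun i => (x + y) i = 1)
      = (Finset.univ.filter fun i => (x i = 1 ∧ y i = 0) ∨ (x i = 0 ∧ y i = 1)) := by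
    ext i
    have : ∀ c d : ZMod 2, c + d = 1 ↔ ((c = 1 ∧ d = 0) ∨ (c = 0 ∧ d = 1)) := by decide
    simp [this]
  rw [hpred, Finset.filter_or]
  rw [Finset.card_union_of_disjoint]
  rw [Finset.disjoint_filter]
  intro i _ h1 h2
  rw [h1.1] at h2
  exact absurd h2.1 (by decide)

lemma cell_total (x y : Fin 10 → ZMod 2) :
    (Finset.univ.filter fun i => x i = 1 ∧ y i = 1).card
      + (Finset.univ.filter fun i => x i = 1 ∧ y i = 0).card
      + (Finset.univ.filter fun i => x i = 0 ∧ y i = 1).card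
      + (Finset.univ.filter fun i => x i = 0 ∧ y i = 0).card = 10 := by
  have h := Finset.card_filter_add_card_filter_not
    (s := (Finset.univ : Finset (Fin 10))) (p := fun i => x i = 1)
  have h1 := Finset.card_filter_add_card_filter_not
    (s := Finset.univ.filter fun i : Fin 10 => x i = 1) (p := fun i : Fin 10 => y i = 1)
  have h0 := Finset.card_filter_add_card_filter_not
    (s := Finset.univ.filter fun i : Fin 10 => ¬ x i = 1) (p := fun i : Fin 10 => y i = 1)
  rw [Finset.filter_filter, Finset.filter_filter] at h1 h0
  have hnot : ∀ c : ZMod 2, ¬ c = 1 ↔ c = 0 := by decide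
  simp only [Finset.card_univ, Fintype.card_fin] at h
  have e1 : (Finset.univ.filter fun i : Fin 10 => x i = 1 ∧ ¬ y i = 1)
      = (Finset.univ.filter fun i => x i = 1 ∧ y i = 0) := by
    ext i; simp [hnot]
  have e2 : (Finset.univ.filter fun i : Fin 10 => ¬ x i = 1 ∧ y i = 1)
      = (Finset.univ.filter fun i => x i = 0 ∧ y i = 1) := by
    ext i; simp [hnot]
  have e3 : (Finset.univ.filter fun i : Fin 10 => ¬ x i = 1 ∧ ¬ y i = 1)
      = (Finset.univ.filter fun i => x i = 0 ∧ y i = 0) := by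
    ext i; simp [hnot]
  have e4 : (Finset.univ.filter fun i : Fin 10 => ¬ x i = 1)
      = (Finset.univ.filter fun i => x i = 0) := by ext i; simp [hnot]
  rw [e1] at h1
  rw [e2, e3, e4] at h0
  rw [e4] at h
  omega

lemma exists_perm_of_fiber_card_eq {α β : Type*} [Fintype α] [DecidableEq β] (f g : α → β)
    (h : ∀ c, Fintype.card {a // f a = c} = Fintype.card {a // g a = c}) :
    ∃ σ : Equiv.Perm α, ∀ a, g (σ a) = f a :=
  ⟨Equiv.ofFiberEquiv (fun c => Fintype.equivOfCardEq (h c)),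
    fun a => Equiv.ofFiberEquiv_map _ a⟩

lemma pi_add_eq_zero {x y : Fin 10 → ZMod 2} (h : x + y = 0) : x = y := by
  funext i
  have := congrFun h i
  have h2 : ∀ c d : ZMod 2, c + d = 0 → c = d := by decide
  exact h2 _ _ this

lemma add_add_allOnes (x : Fin 10 → ZMod 2) : x + allOnes + allOnes = x := by
  funext i
  have : ∀ c : ZMod 2, c + 1 + 1 = c := by decide
  exact this _

lemma li_triple {u v w : Fin 10 → ZMod 2} (hu : u ≠ 0) (hv : v ≠ 0) (hw : w ≠ 0)
    (huv : v ≠ u) (hwu : w ≠ u) (hwv : w ≠ v) (hwuv : w ≠ u + v) :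
    LinearIndependent (ZMod 2) ![u, v, w] := by
  rw [Fintype.linearIndependent_iff]
  intro g hg
  rw [Fin.sum_univ_three] at hg
  simp only [Matrix.cons_val_zero, Matrix.cons_val_one, Matrix.head_cons,
    Matrix.cons_val_two, Matrix.tail_cons] at hg
  have hcases : ∀ c : ZMod 2, c = 0 ∨ c = 1 := fun c => zmod2_cases c
  have goal : g 0 = 0 ∧ g 1 = 0 ∧ g 2 = 0 := by
    rcases hcases (g 0) with h0 | h0 <;> rcases hcases (g 1) with h1 | h1 <;>
      rcases hcases (g 2) with h2 | h2 <;>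
      rw [h0, h1, h2] at hg <;>
      simp only [one_smul, zero_smul, add_zero, zero_add] at hg
    · exact ⟨h0, h1, h2⟩
    · exact absurd hg hw
    · exact absurd hg hv
    · exact absurd (pi_add_eq_zero (show w + v = 0 by rw [add_comm]; exact hg)) hwv
    · exact absurd hg hu
    · exact absurd (pi_add_eq_zero (show w + u = 0 by rw [add_comm]; exact hg)) hwu
    · exact absurd (pi_add_eq_zero (show v + u = 0 by rw [add_comm]; exact hg)) huv
    · exact absurd (pi_add_eq_zero (show w + (u + v) = 0 by rw [add_comm]; exact hg)) hwuv
  intro i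
  fin_cases i <;> simp [goal.1, goal.2.1, goal.2.2]

lemma finrank_span_triple {u v w : Fin 10 → ZMod 2} (hu : u ≠ 0) (hv : v ≠ 0) (hw : w ≠ 0)
    (huv : v ≠ u) (hwu : w ≠ u) (hwv : w ≠ v) (hwuv : w ≠ u + v) :
    Module.finrank (ZMod 2) (Submodule.span (ZMod 2) {u, v, w}) = 3 := by
  have hli := li_triple hu hv hw huv hwu hwv hwuv
  have h := finrank_span_eq_card hli
  have hr : Set.range ![u, v, w] = {u, v, w} := by
    ext z
    simp [Matrix.range_cons, Matrix.range_empty]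
    tauto
  rw [hr] at h
  simpa using h

theorem stmt19 :
    -- (a) the distinguished subspace is a good subspace
    GoodSubspace distinguishedU ∧
    -- (b) any good subspace is carried onto it by a permutation of the ten coordinates
    (∀ U' : Submodule (ZMod 2) (Fin 10 → ZMod 2), GoodSubspace U' →
      ∃ σ : Equiv.Perm (Fin 10),
        Submodule.map (LinearEquiv.funCongrLeft (ZMod 2) (ZMod 2) σ).toLinearMap U' =
          distinguishedU) := by
  constructor
  · -- part (a)
    unfold GoodSubspace distinguishedU
    refine ⟨Submodule.subset_span (by simp), ?_, ?_, ?_, ?_⟩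
    · rintro x hx
      obtain ⟨a, b, c, rfl⟩ := mem_span_triple.mp hx
      rcases zmod2_cases a with rfl | rfl <;> rcases zmod2_cases b with rfl | rfl <;>
        rcases zmod2_cases c with rfl | rfl <;> decide
    · exact finrank_span_triple (by decide) (by decide) (by decide) (by decide) (by decide)
        (by decide) (by decide)
    · rintro x hx y hy
      obtain ⟨a, b, c, rfl⟩ := mem_span_triple.mp hx
      obtain ⟨a', b', c', rfl⟩ := mem_span_triple.mp hy
      rcases zmod2_cases a with rfl | rfl <;> rcases zmod2_cases b with rfl | rfl <;>
        rcases zmod2_cases c with rfl | rfl <;> rcases zmod2_cases a' with rfl | rfl <;>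
        rcases zmod2_cases b' with rfl | rfl <;> rcases zmod2_cases c' with rfl | rfl <;> decide
    · rintro x hx
      obtain ⟨a, b, c, rfl⟩ := mem_span_triple.mp hx
      rcases zmod2_cases a with rfl | rfl <;> rcases zmod2_cases b with rfl | rfl <;>
        rcases zmod2_cases c with rfl | rfl <;> decide
  · -- part (b)
    rintro U' ⟨h1, hperp, hrank, hiso, hwt2⟩
    -- every nonzero, non-allOnes element has weight 4 or 6
    have hwts : ∀ x ∈ U', x ≠ 0 → x ≠ allOnes → wt x = 4 ∨ wt x = 6 := by
      intro x hx hx0 hx1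
      have hev : 2 ∣ wt x := wt_parity (hperp x hx)
      have h10 : wt x ≤ 10 := wt_le_ten x
      have hne0 : wt x ≠ 0 := fun h => hx0 (eq_zero_of_wt_eq_zero h)
      have hne10 : wt x ≠ 10 := fun h => hx1 (eq_allOnes_of_wt_eq_ten h)
      have hne2 : wt x ≠ 2 := hwt2 x hx
      have hne8 : wt x ≠ 8 := by
        intro h8
        have hx' : x + allOnes ∈ U' := add_mem hx h1
        have hw' := hwt2 _ hx'
        rw [wt_add_allOnes, h8] at hw'
        exact hw' rfl
      omega
    have h1ne0 : allOnes ≠ (0 : Fin 10 → ZMod 2) := by decide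
    haveI : FiniteDimensional (ZMod 2) (Fin 10 → ZMod 2) := by infer_instance
    -- pick a
    have hex_a : ∃ a, a ∈ U' ∧ a ≠ 0 ∧ a ≠ allOnes := by
      by_contra hcon
      push_neg at hcon
      have hle : U' ≤ Submodule.span (ZMod 2) {allOnes} := by
        intro x hx
        rcases eq_or_ne x 0 with rfl | hx0
        · exact zero_mem _
        · rw [hcon x hx hx0]; exact Submodule.subset_span rfl
      have hm := Submodule.finrank_mono (R := ZMod 2) hle
      rw [hrank, finrank_span_singleton h1ne0] at hm
      omega
    obtain ⟨a, ha, ha0, ha1⟩ := hex_a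
    -- pick b
    have hex_b : ∃ b, b ∈ U' ∧ b ≠ 0 ∧ b ≠ allOnes ∧ b ≠ a ∧ b ≠ a + allOnes := by
      by_contra hcon
      push_neg at hcon
      have h1m : allOnes ∈ Submodule.span (ZMod 2) {allOnes, a} :=
        Submodule.subset_span (by simp)
      have ham : a ∈ Submodule.span (ZMod 2) {allOnes, a} :=
        Submodule.subset_span (by simp)
      have hle : U' ≤ Submodule.span (ZMod 2) {allOnes, a} := by
        intro x hx
        rcases eq_or_ne x 0 with rfl | hx0
        · exact zero_mem _
        rcases eq_or_ne x allOnes with rfl | hx1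
        · exact h1m
        rcases eq_or_ne x a with rfl | hxa
        · exact ham
        rw [hcon x hx hx0 hx1 hxa]
        exact add_mem ham h1m
      have hm := Submodule.finrank_mono (R := ZMod 2) hle
      have hsp : Module.finrank (ZMod 2) (Submodule.span (ZMod 2) ({allOnes, a} : Set (Fin 10 → ZMod 2))) ≤ 2 := by
        refine le_trans (finrank_span_le_card _) ?_
        rw [Set.toFinset_insert, Set.toFinset_singleton]
        exact le_trans (Finset.card_insert_le _ _) (by simp)
      rw [hrank] at hm
      omega
    obtain ⟨b, hb, hb0, hb1, hba, hba1⟩ := hex_b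
    -- normalize to weight-4 representatives
    have key : ∀ x, x ∈ U' → x ≠ 0 → x ≠ allOnes →
        ∃ x', x' ∈ U' ∧ wt x' = 4 ∧ (x' = x ∨ x' = x + allOnes) := by
      intro x hx hx0 hx1
      rcases hwts x hx hx0 hx1 with h4 | h6
      · exact ⟨x, hx, h4, Or.inl rfl⟩
      · refine ⟨x + allOnes, add_mem hx h1, ?_, Or.inr rfl⟩
        rw [wt_add_allOnes, h6]
    obtain ⟨a', ha', hwa', haor⟩ := key a ha ha0 ha1
    obtain ⟨b', hb', hwb', hbor⟩ := key b hb hb0 hb1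
    -- basic facts about a', b'
    have hwt_zero : wt (0 : Fin 10 → ZMod 2) = 0 := by decide
    have hwt_ones : wt allOnes = 10 := by decide
    have ha'0 : a' ≠ 0 := fun h => by rw [h, hwt_zero] at hwa'; omega
    have hb'0 : b' ≠ 0 := fun h => by rw [h, hwt_zero] at hwb'; omega
    have ha'1 : a' ≠ allOnes := fun h => by rw [h, hwt_ones] at hwa'; omega
    have hb'1 : b' ≠ allOnes := fun h => by rw [h, hwt_ones] at hwb'; omega
    have hb'a' : b' ≠ a' := by
      intro h₃
      rcases haor with h₁ | h₁ <;> rcases hbor with h₂ | h₂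
      · exact hba (by rw [← h₂, h₃, h₁])
      · exact hba1 (by rw [← add_add_allOnes b, ← h₂, h₃, h₁])
      · exact hba1 (by rw [← h₂, h₃, h₁])
      · exact hba (by rw [← add_add_allOnes b, ← h₂, h₃, h₁, add_add_allOnes])
    have hb'a'1 : b' ≠ a' + allOnes := by
      intro h₃
      rcases haor with h₁ | h₁ <;> rcases hbor with h₂ | h₂
      · exact hba1 (by rw [← h₂, h₃, h₁])
      · exact hba (by rw [← add_add_allOnes b, ← h₂, h₃, h₁, add_add_allOnes])
      · exact hba (by rw [← h₂, h₃, h₁, add_add_allOnes])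
      · exact hba1 (by rw [← add_add_allOnes b, ← h₂, h₃, add_add_allOnes, h₁])
    -- a' + b' ∈ U', nonzero, not allOnes, so weight 4 or 6
    have hab : a' + b' ∈ U' := add_mem ha' hb'
    have hab0 : a' + b' ≠ 0 := fun h => hb'a' (pi_add_eq_zero h).symm
    have hab1 : a' + b' ≠ allOnes := by
      intro h
      apply hb'a'1
      rw [← h]
      funext i
      have : ∀ c d : ZMod 2, d = c + (c + d) := by decide
      exact this _ _
    have hwab : wt (a' + b') = 4 ∨ wt (a' + b') = 6 := hwts _ hab hab0 hab1
    -- cell counts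
    set n11 := (Finset.univ.filter fun i => a' i = 1 ∧ b' i = 1).card with hn11
    set n10 := (Finset.univ.filter fun i => a' i = 1 ∧ b' i = 0).card with hn10
    set n01 := (Finset.univ.filter fun i => a' i = 0 ∧ b' i = 1).card with hn01
    set n00 := (Finset.univ.filter fun i => a' i = 0 ∧ b' i = 0).card with hn00
    have hsplit_a : wt a' = n11 + n10 := wt_split a' b'
    have hsplit_b : wt b' = n11 + n01 := by
      have h := wt_split b' a'
      have e1 : (Finset.univ.filter fun i => b' i = 1 ∧ a' i = 1)
          = (Finset.univ.filter fun i => a' i = 1 ∧ b' i = 1) := by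
        ext i; simp [and_comm]
      have e2 : (Finset.univ.filter fun i => b' i = 1 ∧ a' i = 0)
          = (Finset.univ.filter fun i => a' i = 0 ∧ b' i = 1) := by
        ext i; simp [and_comm]
      rw [e1, e2] at h
      exact h
    have hsplit_ab : wt (a' + b') = n10 + n01 := wt_add_split a' b'
    have htotal : n11 + n10 + n01 + n00 = 10 := cell_total a' b'
    have hn11even : 2 ∣ n11 := by
      have hd := hiso a' ha' b' hb'
      rw [dotForm_eq_card] at hd
      exact (ZMod.natCast_eq_zero_iff _ _).mp hd
    have hcells : n11 = 2 ∧ n10 = 2 ∧ n01 = 2 ∧ n00 = 4 := by omega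
    -- build the permutation
    have hcards : ∀ c : ZMod 2 × ZMod 2,
        Fintype.card {i : Fin 10 // (v₁₂₃₄ i, v₃₄₅₆ i) = c}
          = Fintype.card {i : Fin 10 // (a' i, b' i) = c} := by
      intro c
      obtain ⟨c1, c2⟩ := c
      have hrw : ∀ c1 c2 : ZMod 2, Fintype.card {i : Fin 10 // (a' i, b' i) = (c1, c2)}
          = (Finset.univ.filter fun i => a' i = c1 ∧ b' i = c2).card := by
        intro c1 c2
        rw [Fintype.card_subtype]
        congr 1
        ext i
        simp [Prod.ext_iff]
      rcases zmod2_cases c1 with rfl | rfl <;> rcases zmod2_cases c2 with rfl | rfl <;>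
        rw [hrw] <;>
        [ (rw [← hn00]; rw [show (Fintype.card {i : Fin 10 // (v₁₂₃₄ i, v₃₄₅₆ i) = ((0:ZMod 2), (0:ZMod 2))}) = 4 by decide]; omega);
          (rw [← hn01]; rw [show (Fintype.card {i : Fin 10 // (v₁₂₃₄ i, v₃₄₅₆ i) = ((0:ZMod 2), (1:ZMod 2))}) = 2 by decide]; omega);
          (rw [← hn10]; rw [show (Fintype.card {i : Fin 10 // (v₁₂₃₄ i, v₃₄₅₆ i) = ((1:ZMod 2), (0:ZMod 2))}) = 2 by decide]; omega);
          (rw [← hn11]; rw [show (Fintype.card {i : Fin 10 // (v₁₂₃₄ i, v₃₄₅₆ i) = ((1:ZMod 2), (1:ZMod 2))}) = 2 by decide]; omega) ]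
    obtain ⟨σ, hσ⟩ := exists_perm_of_fiber_card_eq
      (fun i => (v₁₂₃₄ i, v₃₄₅₆ i)) (fun i => (a' i, b' i)) hcards
    have ha'σ : a' ∘ σ = v₁₂₃₄ := by
      funext i
      exact congrArg Prod.fst (hσ i)
    have hb'σ : b' ∘ σ = v₃₄₅₆ := by
      funext i
      exact congrArg Prod.snd (hσ i)
    -- U' = span {allOnes, a', b'}
    have hspan : Submodule.span (ZMod 2) {allOnes, a', b'} = U' := by
      apply Submodule.eq_of_le_of_finrank_eq
      · rw [Submodule.span_le]
        rintro x (rfl | rfl | rfl)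
        · exact h1
        · exact ha'
        · exact hb'
      · rw [hrank]
        refine finrank_span_triple h1ne0 ha'0 hb'0 ha'1 hb'1 hb'a' ?_
        rw [add_comm]
        exact hb'a'1
    refine ⟨σ, ?_⟩
    rw [← hspan, Submodule.map_span]
    have himg : (LinearEquiv.funCongrLeft (ZMod 2) (ZMod 2) σ).toLinearMap ''
        {allOnes, a', b'} = {allOnes, v₁₂₃₄, v₃₄₅₆} := by
      rw [Set.image_insert_eq, Set.image_insert_eq, Set.image_singleton]
      have happ : ∀ x : Fin 10 → ZMod 2,
          (LinearEquiv.funCongrLeft (ZMod 2) (ZMod 2) σ).toLinearMap x = x ∘ σ := fun x => rfl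
      rw [happ, happ, happ, ha'σ, hb'σ]
      rfl
    rw [himg]
    rfl
end
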